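/- arXiv:2002.02230 — 9 statements merged into one kernel-verified Lean document; each statement's English description precedes it below -/
import Mathlib

section
/- Let H be an infinite-dimensional complex Hilbert space, let φ : B₊(H) → B₊(H) be a map, and let T : H → H be a bounded, invertible, linear operator such that ran φ(A)^{1/2} = ran(T A^{1/2}) for all A ∈ B₊(H). Then for every A ∈ B₊(H) there exists an invertible positive operator Z_A ∈ B₊(H) such that φ(A) = (TAT*)^{1/2} Z_A (TAT*)^{1/2}. -/
set_option synthInstance.maxHeartbeats 1000000
set_option maxHeartbeats 1000000

open ContinuousLinearMap Filter Topology

variable {H : Type} [NormedAddCommGroup H] [InnerProductSpace ℂ H] [CompleteSpace H]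

/-- The Loewner order on bounded operators: `A ≤ B` iff `B - A` is positive. -/
def Loewner (A B : H →L[ℂ] H) : Prop := (B - A).IsPositive

/-- `A` is `B`-absolutely continuous: `A` is the strong-operator-topology limit of a
monotone increasing sequence of positive operators, each dominated by a nonnegative
multiple of `B`. -/
def AbsCont (A B : H →L[ℂ] H) : Prop :=
  ∃ f : ℕ → H →L[ℂ] H,
    (∀ n, (f n).IsPositive) ∧
    (∀ m n, m ≤ n → Loewner (f m) (f n)) ∧
    (∀ n, ∃ c : ℝ, 0 ≤ c ∧ Loewner (f n) (c • B)) ∧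
    (∀ x : H, Tendsto (fun n => f n x) atTop (𝓝 (A x)))

/-- `A` and `B` are singular: the only positive operator below both (in the Loewner
order) is `0`. -/
def Singular (A B : H →L[ℂ] H) : Prop :=
  ∀ C : H →L[ℂ] H, C.IsPositive → Loewner C A → Loewner C B → C = 0

/-- An operator range: a subspace which is the range of some bounded operator. -/
def IsOpRange (M : Submodule ℂ H) : Prop := ∃ S : H →L[ℂ] H, LinearMap.range (S : H →ₗ[ℂ] H) = M
open RCLike in
lemma douglas_range (S R : H →L[ℂ] H) (h : Set.range ⇑S ⊆ Set.range ⇑R) :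
    ∃ C : H →L[ℂ] H, S = R * C := by
  set K : Submodule ℂ H := LinearMap.ker (R : H →ₗ[ℂ] H) with hK
  have hKc : IsClosed (K : Set H) := ContinuousLinearMap.isClosed_ker R
  haveI : CompleteSpace K := hKc.completeSpace_coe
  -- existence and uniqueness of preimage in Kᗮ
  have hexu : ∀ x : H, ∃! z : H, z ∈ Kᗮ ∧ R z = S x := by
    intro x
    obtain ⟨w, hw⟩ := h ⟨x, rfl⟩
    refine ⟨w - K.orthogonalProjectionOnto w, ⟨K.sub_starProjection_mem_orthogonal w, ?_⟩, ?_⟩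
    · have : R (K.orthogonalProjectionOnto w) = 0 := (K.orthogonalProjectionOnto w).2
      simpa [map_sub, hw] using this
    · rintro z ⟨hz1, hz2⟩
      have hmem : z - (w - K.orthogonalProjectionOnto w) ∈ K := by
        have : R (K.orthogonalProjectionOnto w) = 0 := (K.orthogonalProjectionOnto w).2
        simp only [hK, LinearMap.mem_ker]
        simpa [map_sub, hz2, hw] using this
      have hmem2 : z - (w - K.orthogonalProjectionOnto w) ∈ Kᗮ :=
        Submodule.sub_mem _ hz1 (K.sub_starProjection_mem_orthogonal w)
      have := (Submodule.mem_orthogonal K _).mp hmem2 _ hmem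
      rw [sub_eq_zero.mp (inner_self_eq_zero.mp this)]
  classical
  let f : H → H := fun x => (hexu x).exists.choose
  have hf : ∀ x, f x ∈ Kᗮ ∧ R (f x) = S x := fun x => (hexu x).exists.choose_spec
  have huniq : ∀ x z, z ∈ Kᗮ → R z = S x → z = f x := fun x z h1 h2 =>
    ((hexu x).unique ⟨h1, h2⟩ ⟨(hf x).1, (hf x).2⟩)
  let C₀ : H →ₗ[ℂ] H :=
    { toFun := f
      map_add' := fun x y => by
        refine (huniq (x + y) (f x + f y) (Submodule.add_mem _ (hf x).1 (hf y).1) ?_).symm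
        simp [map_add, (hf x).2, (hf y).2]
      map_smul' := fun c x => by
        refine (huniq (c • x) (c • f x) (Submodule.smul_mem _ _ (hf x).1) ?_).symm
        simp [map_smul, (hf x).2] }
  have hgraph : (C₀.graph : Set (H × H)) = {p : H × H | p.2 ∈ Kᗮ ∧ R p.2 = S p.1} := by
    ext p
    simp only [SetLike.mem_coe, LinearMap.mem_graph_iff, Set.mem_setOf_eq]
    constructor
    · intro hp; rw [hp]; exact ⟨(hf p.1).1, (hf p.1).2⟩
    · rintro ⟨h1, h2⟩; exact huniq p.1 p.2 h1 h2
  have hclosed : IsClosed (C₀.graph : Set (H × H)) := by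
    rw [hgraph]
    exact ((Submodule.isClosed_orthogonal K).preimage continuous_snd).inter
      (isClosed_eq (R.continuous.comp continuous_snd) (S.continuous.comp continuous_fst))
  have hcont : Continuous C₀ := C₀.continuous_of_isClosed_graph hclosed
  refine ⟨⟨C₀, hcont⟩, ?_⟩
  ext x
  exact ((hf x).2).symm

open RCLike in
lemma factor_of_adjoint_norm_le (S R : H →L[ℂ] H) (h : ∀ x, ‖adjoint S x‖ ≤ ‖adjoint R x‖) :
    ∃ V : H →L[ℂ] H, S = R * V := by
  classical
  have hker : ∀ x y : H, adjoint R x = adjoint R y → adjoint S x = adjoint S y := by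
    intro x y hxy
    have h0 : adjoint R (x - y) = 0 := by rw [map_sub, hxy, sub_self]
    have := h (x - y)
    rw [h0, norm_zero] at this
    have : adjoint S (x - y) = 0 := norm_le_zero_iff.mp this
    rw [map_sub, sub_eq_zero] at this
    exact this
  set M : Submodule ℂ H := LinearMap.range (adjoint R : H →ₗ[ℂ] H) with hM
  have hchoose : ∀ m : M, ∃ x : H, adjoint R x = (m : H) := fun m => m.2
  let g : M → H := fun m => adjoint S (hchoose m).choose
  have hg : ∀ (m : M) (x : H), adjoint R x = (m : H) → g m = adjoint S x := by
    intro m x hx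
    exact hker _ _ ((hchoose m).choose_spec.trans hx.symm)
  let f₀ : M →ₗ[ℂ] H :=
    { toFun := g
      map_add' := fun m n => by
        obtain ⟨x, hx⟩ := hchoose m; obtain ⟨y, hy⟩ := hchoose n
        show g (m + n) = g m + g n
        rw [hg m x hx, hg n y hy, hg (m + n) (x + y) (by simp [hx, hy]), map_add]
      map_smul' := fun c m => by
        obtain ⟨x, hx⟩ := hchoose m
        show g (c • m) = c • g m
        rw [hg m x hx, hg (c • m) (c • x) (by simp [hx]), map_smul] }
  have hf₀ : ∀ m : M, ‖f₀ m‖ ≤ 1 * ‖m‖ := by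
    intro m
    obtain ⟨x, hx⟩ := hchoose m
    have : f₀ m = adjoint S x := hg m x hx
    rw [this, one_mul]
    calc ‖adjoint S x‖ ≤ ‖adjoint R x‖ := h x
    _ = ‖m‖ := by rw [hx]; rfl
  let fL : M →L[ℂ] H := f₀.mkContinuous 1 hf₀
  set K : Submodule ℂ H := M.topologicalClosure with hKdef
  haveI : CompleteSpace K := Submodule.topologicalClosure.completeSpace M
  have hMK : M ≤ K := Submodule.le_topologicalClosure M
  let e₀ : M →ₗ[ℂ] K := Submodule.inclusion hMK
  have he₀ : ∀ m : M, ‖e₀ m‖ = ‖m‖ := fun m => rfl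
  let e : M →L[ℂ] K := e₀.mkContinuous 1 (fun m => by rw [he₀, one_mul])
  have hiso : Isometry e := AddMonoidHomClass.isometry_of_norm e he₀
  have h_e : IsUniformInducing e := hiso.isUniformInducing
  have h_dense : DenseRange e := by
    intro y
    rw [closure_subtype]
    have himg : (↑) '' (Set.range e) = (M : Set H) := by
      ext z
      constructor
      · rintro ⟨w, ⟨m, rfl⟩, rfl⟩; exact m.2
      · rintro hz; exact ⟨e ⟨z, hz⟩, ⟨⟨z, hz⟩, rfl⟩, rfl⟩
    rw [himg, ← Submodule.topologicalClosure_coe]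
    exact y.2
  let V₁ : K →L[ℂ] H := fL.extend e
  let V : H →L[ℂ] H := V₁ ∘L (K.orthogonalProjectionOnto : H →L[ℂ] K)
  have hV : ∀ x : H, V (adjoint R x) = adjoint S x := by
    intro x
    have hmem : adjoint R x ∈ K := hMK ⟨x, rfl⟩
    have hproj : K.orthogonalProjectionOnto (adjoint R x) = ⟨adjoint R x, hmem⟩ :=
      Submodule.orthogonalProjectionOnto_mem_subspace_eq_self (⟨adjoint R x, hmem⟩ : K)
    have hVx : V (adjoint R x) = V₁ ⟨adjoint R x, hmem⟩ := by
      simp only [V, ContinuousLinearMap.comp_apply, hproj]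
    rw [hVx]
    have he' : e ⟨adjoint R x, ⟨x, rfl⟩⟩ = ⟨adjoint R x, hmem⟩ := rfl
    rw [← he', ContinuousLinearMap.extend_eq _ h_dense h_e]
    exact hg ⟨adjoint R x, ⟨x, rfl⟩⟩ x rfl
  have hcomp : V ∘L adjoint R = adjoint S := ContinuousLinearMap.ext hV
  refine ⟨adjoint V, ?_⟩
  have := congrArg ContinuousLinearMap.adjoint hcomp
  rw [adjoint_comp, adjoint_adjoint, adjoint_adjoint] at this
  exact this.symm

local notation "⟪" x ", " y "⟫" => @inner ℂ _ _ x y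

open RCLike in
lemma norm_adjoint_eq_of_mul (S R : H →L[ℂ] H) (h : S * adjoint S = R * adjoint R) (x : H) :
    ‖adjoint S x‖ = ‖adjoint R x‖ := by
  have key : ∀ W : H →L[ℂ] H, ‖adjoint W x‖ ^ 2 = re ⟪(W * adjoint W) x, x⟫ := by
    intro W
    rw [mul_def, comp_apply, ← adjoint_inner_right, inner_self_eq_norm_sq]
  have h2 : ‖adjoint S x‖ ^ 2 = ‖adjoint R x‖ ^ 2 := by rw [key, key, h]
  nlinarith [norm_nonneg (adjoint S x), norm_nonneg (adjoint R x), h2]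

lemma range_eq_of_mul_adjoint_eq (S R : H →L[ℂ] H) (h : S * adjoint S = R * adjoint R) :
    Set.range ⇑S = Set.range ⇑R := by
  obtain ⟨V, hV⟩ := factor_of_adjoint_norm_le S R
    (fun x => (norm_adjoint_eq_of_mul S R h x).le)
  obtain ⟨W, hW⟩ := factor_of_adjoint_norm_le R S
    (fun x => (norm_adjoint_eq_of_mul S R h x).ge)
  apply Set.Subset.antisymm
  · rw [hV]; intro y ⟨x, hx⟩; exact ⟨V x, by rw [← hx]; rfl⟩
  · rw [hW]; intro y ⟨x, hx⟩; exact ⟨W x, by rw [← hx]; rfl⟩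

open RCLike in
lemma exists_unit_factor {P B : H →L[ℂ] H} (hP : P.IsPositive) (hB : B.IsPositive)
    (hr : Set.range ⇑(CFC.sqrt P) = Set.range ⇑(CFC.sqrt B)) :
    ∃ Z : H →L[ℂ] H, Z.IsPositive ∧ IsUnit Z ∧ P = CFC.sqrt B * Z * CFC.sqrt B := by
  have hPn : (0:H →L[ℂ] H) ≤ P := (nonneg_iff_isPositive P).mpr hP
  have hBn : (0:H →L[ℂ] H) ≤ B := (nonneg_iff_isPositive B).mpr hB
  set p : H →L[ℂ] H := CFC.sqrt P with hpdef
  set b : H →L[ℂ] H := CFC.sqrt B with hbdef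
  have hpn : (0:H →L[ℂ] H) ≤ p := CFC.sqrt_nonneg _
  have hbn : (0:H →L[ℂ] H) ≤ b := CFC.sqrt_nonneg _
  have hpsa : IsSelfAdjoint p := IsSelfAdjoint.of_nonneg hpn
  have hbsa : IsSelfAdjoint b := IsSelfAdjoint.of_nonneg hbn
  have hpa : adjoint p = p := hpsa.adjoint_eq
  have hba : adjoint b = b := hbsa.adjoint_eq
  have hpp : p * p = P := CFC.sqrt_mul_sqrt_self P hPn
  have hbb : b * b = B := CFC.sqrt_mul_sqrt_self B hBn
  obtain ⟨C, hC⟩ := douglas_range p b (by rw [hr])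
  obtain ⟨D, hD⟩ := douglas_range b p (by rw [hr])
  -- adjoint versions
  have hC' : adjoint C * b = p := by
    have := congrArg adjoint hC
    rw [mul_def, adjoint_comp, hpa, hba, ← mul_def] at this
    exact this.symm
  have hD' : adjoint D * p = b := by
    have := congrArg adjoint hD
    rw [mul_def, adjoint_comp, hpa, hba, ← mul_def] at this
    exact this.symm
  set Z₀ : H →L[ℂ] H := C * adjoint C with hZ₀def
  have hZ₀pos : Z₀.IsPositive := by
    have := (isPositive_one (E := H) (𝕜 := ℂ)).conj_adjoint C
    simpa [mul_def, hZ₀def, one_def] using this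
  have hPZ₀ : P = b * Z₀ * b := by
    rw [← hpp]
    nth_rw 1 [hC]
    rw [← hC']
    noncomm_ring
  -- inner product identity on range b
  have hinner : ∀ x : H, re ⟪Z₀ (b x), b x⟫ = ‖p x‖ ^ 2 := by
    intro x
    have h1 : Z₀ (b x) = C (adjoint C (b x)) := rfl
    have h2 : adjoint C (b x) = p x := by
      rw [← hC']; rfl
    rw [h1, ← adjoint_inner_right, h2, inner_self_eq_norm_sq]
  -- coercivity constant
  set c : ℝ := (‖adjoint D‖ ^ 2 + 1)⁻¹ with hcdef
  have hcpos : 0 < c := by positivity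
  have hlow : ∀ x : H, c * ‖b x‖ ^ 2 ≤ ‖p x‖ ^ 2 := by
    intro x
    have hb1 : ‖b x‖ ≤ ‖adjoint D‖ * ‖p x‖ := by
      have : b x = adjoint D (p x) := by rw [← hD']; rfl
      rw [this]
      exact le_opNorm (adjoint D) (p x)
    have h2 : ‖b x‖ ^ 2 ≤ (‖adjoint D‖ ^ 2 + 1) * ‖p x‖ ^ 2 := by
      nlinarith [norm_nonneg (b x), norm_nonneg (p x), norm_nonneg (adjoint D)]
    have hcc : c * (‖adjoint D‖ ^ 2 + 1) = 1 := by
      rw [hcdef]; field_simp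
    calc c * ‖b x‖ ^ 2 ≤ c * ((‖adjoint D‖ ^ 2 + 1) * ‖p x‖ ^ 2) :=
          mul_le_mul_of_nonneg_left h2 hcpos.le
    _ = (c * (‖adjoint D‖ ^ 2 + 1)) * ‖p x‖ ^ 2 := by ring
    _ = ‖p x‖ ^ 2 := by rw [hcc, one_mul]
  -- the closure of the range of b
  set K : Submodule ℂ H := (LinearMap.range (b : H →ₗ[ℂ] H)).topologicalClosure with hKdef
  haveI : CompleteSpace K := Submodule.topologicalClosure.completeSpace (LinearMap.range (b : H →ₗ[ℂ] H))
  have hKco : ∀ y ∈ K, c * ‖y‖ ^ 2 ≤ re ⟪Z₀ y, y⟫ := by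
    have hcont : Continuous fun y : H => re ⟪Z₀ y, y⟫ - c * ‖y‖ ^ 2 := by
      apply Continuous.sub
      · exact RCLike.continuous_re.comp (continuous_inner.comp
          (Z₀.continuous.prodMk continuous_id))
      · exact (continuous_const.mul ((continuous_norm).pow 2))
    have hclosed : IsClosed {y : H | 0 ≤ re ⟪Z₀ y, y⟫ - c * ‖y‖ ^ 2} :=
      isClosed_le continuous_const hcont
    intro y hy
    have hsub : (K : Set H) ⊆ {y : H | 0 ≤ re ⟪Z₀ y, y⟫ - c * ‖y‖ ^ 2} := by
      rw [hKdef, Submodule.topologicalClosure_coe]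
      apply closure_minimal _ hclosed
      rintro z ⟨x, rfl⟩
      simp only [Set.mem_setOf_eq, sub_nonneg]
      calc c * ‖b x‖ ^ 2 ≤ ‖p x‖ ^ 2 := hlow x
      _ = re ⟪Z₀ (b x), b x⟫ := (hinner x).symm
    have := hsub hy
    simpa [sub_nonneg] using this
  -- projection
  set Pk : H →L[ℂ] H := K.subtypeL ∘L K.orthogonalProjectionOnto with hPkdef
  have hPk_sa : IsSelfAdjoint Pk := isSelfAdjoint_starProjection K
  have hPk_mem : ∀ x : H, Pk x ∈ K := fun x => (K.orthogonalProjectionOnto x).2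
  have hPk_fix : ∀ y ∈ K, Pk y = y := by
    intro y hy
    simp only [hPkdef, comp_apply, Submodule.subtypeL_apply]
    exact congrArg Subtype.val (Submodule.orthogonalProjectionOnto_mem_subspace_eq_self (⟨y, hy⟩ : K))
  have hPk_b : Pk * b = b := by
    ext x
    exact hPk_fix (b x) (Submodule.le_topologicalClosure _ ⟨x, rfl⟩)
  have hb_Pk : b * Pk = b := by
    have := congrArg adjoint hPk_b
    rw [mul_def, adjoint_comp, hba, hPk_sa.adjoint_eq, ← mul_def] at this
    exact this
  set Z : H →L[ℂ] H := Pk * Z₀ * Pk + (1 - Pk) with hZdef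
  -- orthogonal decomposition facts
  have hdecomp : ∀ x : H, ⟪Pk x, x - Pk x⟫ = 0 := by
    intro x
    have h1 : x - Pk x ∈ Kᗮ := K.sub_starProjection_mem_orthogonal x
    exact (Submodule.mem_orthogonal K _).mp h1 _ (hPk_mem x)
  have hpyth : ∀ x : H, ‖x‖ ^ 2 = ‖Pk x‖ ^ 2 + ‖x - Pk x‖ ^ 2 := by
    intro x
    have h6 := norm_add_sq_eq_norm_sq_add_norm_sq_of_inner_eq_zero (Pk x) (x - Pk x) (hdecomp x)
    have h0 : Pk x + (x - Pk x) = x := by abel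
    rw [h0] at h6
    rw [pow_two, pow_two, pow_two]
    exact h6
  have hsym : ∀ w y : H, ⟪Pk w, y⟫ = ⟪w, Pk y⟫ := by
    intro w y
    nth_rw 1 [← hPk_sa.adjoint_eq]
    rw [adjoint_inner_left]
  have e4 : ∀ x : H, re ⟪x - Pk x, x⟫ = ‖x - Pk x‖ ^ 2 := by
    intro x
    have h' : ⟪x - Pk x, x⟫ = ⟪x - Pk x, Pk x⟫ + ⟪x - Pk x, x - Pk x⟫ := by
      rw [← inner_add_right]; congr 1; abel
    have h5 : ⟪x - Pk x, Pk x⟫ = 0 := by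
      rw [← inner_conj_symm, hdecomp x, map_zero]
    rw [h', h5, zero_add]
    exact inner_self_eq_norm_sq _
  have hZinner : ∀ x : H, re ⟪Z x, x⟫ = re ⟪Z₀ (Pk x), Pk x⟫ + ‖x - Pk x‖ ^ 2 := by
    intro x
    have e1 : (Pk * Z₀ * Pk) x = Pk (Z₀ (Pk x)) := rfl
    have e2 : (1 - Pk) x = x - Pk x := by simp [sub_apply]
    have key : ⟪Z x, x⟫ = ⟪Pk (Z₀ (Pk x)), x⟫ + ⟪x - Pk x, x⟫ := by
      rw [hZdef]
      simp only [add_apply, inner_add_left, e1, e2]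
    rw [key, map_add, hsym (Z₀ (Pk x)) x, e4 x]
  -- Z is positive
  have hZ1pos : (Pk * Z₀ * Pk).IsPositive := by
    have := hZ₀pos.conj_adjoint Pk
    rw [hPk_sa.adjoint_eq] at this
    simpa [mul_def, ContinuousLinearMap.comp_assoc] using this
  have hZ2pos : (1 - Pk).IsPositive := by
    constructor
    · exact isSelfAdjoint_iff_isSymmetric.mp ((IsSelfAdjoint.one (R := H →L[ℂ] H)).sub hPk_sa)
    · intro x
      have e2 : (1 - Pk) x = x - Pk x := by simp [sub_apply]
      show 0 ≤ re ⟪(1 - Pk) x, x⟫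
      rw [e2, e4 x]
      positivity
  have hZpos : Z.IsPositive := hZ1pos.add hZ2pos
  -- Z is coercive hence a unit
  set c' : ℝ := min c 1 with hc'def
  have hc'pos : 0 < c' := lt_min hcpos one_pos
  have hcoer : ∀ x : H, c' * ‖x‖ ^ 2 ≤ re ⟪Z x, x⟫ := by
    intro x
    rw [hZinner x, hpyth x]
    have h1 : c * ‖Pk x‖ ^ 2 ≤ re ⟪Z₀ (Pk x), Pk x⟫ := hKco (Pk x) (hPk_mem x)
    have h2 : c' ≤ c := min_le_left _ _
    have h3 : c' ≤ 1 := min_le_right _ _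
    nlinarith [norm_nonneg (Pk x), norm_nonneg (x - Pk x), sq_nonneg ‖Pk x‖,
      sq_nonneg ‖x - Pk x‖]
  have hZunit : IsUnit Z := by
    apply isUnit_of_forall_le_norm_inner_map Z (c := ⟨c', hc'pos.le⟩)
      (by exact_mod_cast hc'pos)
    intro x
    calc ‖x‖ ^ 2 * (⟨c', hc'pos.le⟩ : NNReal) = c' * ‖x‖ ^ 2 := by
          simp [mul_comm]
    _ ≤ re ⟪Z x, x⟫ := hcoer x
    _ ≤ ‖⟪Z x, x⟫‖ := re_le_norm _
  -- final identity
  refine ⟨Z, hZpos, hZunit, ?_⟩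
  have key : b * Z * b = b * Pk * Z₀ * (Pk * b) + (b * b - b * Pk * b) := by
    rw [hZdef]; noncomm_ring
  rw [key, hb_Pk, hPk_b, sub_self, add_zero, ← hPZ₀]

open RCLike in
/-- If `ran φ(A)^{1/2} = ran (T A^{1/2})` for a bounded invertible linear
`T`, then `φ(A) = (TAT*)^{1/2} Z_A (TAT*)^{1/2}` for some invertible positive `Z_A`. -/
theorem stmt2 (hinf : ¬ FiniteDimensional ℂ H)
    (φ : (H →L[ℂ] H) → (H →L[ℂ] H))
    (hmaps : ∀ A : H →L[ℂ] H, A.IsPositive → (φ A).IsPositive)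
    (T : H ≃L[ℂ] H)
    (hran : ∀ A : H →L[ℂ] H, A.IsPositive →
        Set.range ⇑(CFC.sqrt (φ A)) = Set.range ⇑((T : H →L[ℂ] H) * CFC.sqrt A)) :
    ∀ A : H →L[ℂ] H, A.IsPositive → ∃ Z : H →L[ℂ] H, Z.IsPositive ∧ IsUnit Z ∧
      φ A = CFC.sqrt ((T : H →L[ℂ] H) * A * adjoint (T : H →L[ℂ] H)) * Z *
        CFC.sqrt ((T : H →L[ℂ] H) * A * adjoint (T : H →L[ℂ] H)) := by
  intro A hA
  have hAn : (0:H →L[ℂ] H) ≤ A := (nonneg_iff_isPositive A).mpr hA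
  set Tc : H →L[ℂ] H := (T : H →L[ℂ] H) with hTc
  have hB : (Tc * A * adjoint Tc).IsPositive := by
    have := hA.conj_adjoint Tc
    have h2 : Tc ∘L A ∘L adjoint Tc = Tc * A * adjoint Tc := by
      rw [mul_def, mul_def, ContinuousLinearMap.comp_assoc]
    rwa [h2] at this
  have hBn : (0:H →L[ℂ] H) ≤ Tc * A * adjoint Tc := (nonneg_iff_isPositive _).mpr hB
  have hsa : adjoint (CFC.sqrt A) = CFC.sqrt A :=
    (IsSelfAdjoint.of_nonneg (CFC.sqrt_nonneg (a := A))).adjoint_eq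
  have hsb : adjoint (CFC.sqrt (Tc * A * adjoint Tc)) = CFC.sqrt (Tc * A * adjoint Tc) :=
    (IsSelfAdjoint.of_nonneg (CFC.sqrt_nonneg (a := Tc * A * adjoint Tc))).adjoint_eq
  have hS : Set.range ⇑(CFC.sqrt (φ A)) = Set.range ⇑(CFC.sqrt (Tc * A * adjoint Tc)) := by
    rw [hran A hA]
    apply range_eq_of_mul_adjoint_eq
    have h1 : adjoint (Tc * CFC.sqrt A) = CFC.sqrt A * adjoint Tc := by
      rw [mul_def, adjoint_comp, hsa, ← mul_def]
    rw [h1, hsb]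
    calc Tc * CFC.sqrt A * (CFC.sqrt A * adjoint Tc)
        = Tc * (CFC.sqrt A * CFC.sqrt A) * adjoint Tc := by noncomm_ring
    _ = Tc * A * adjoint Tc := by rw [CFC.sqrt_mul_sqrt_self A hAn]
    _ = CFC.sqrt (Tc * A * adjoint Tc) * CFC.sqrt (Tc * A * adjoint Tc) :=
        (CFC.sqrt_mul_sqrt_self _ hBn).symm
  obtain ⟨Z, h1, h2, h3⟩ := exists_unit_factor (hmaps A hA) hB hS
  exact ⟨Z, h1, h2, h3⟩
end

section
/- Let H be an infinite-dimensional complex Hilbert space and let φ : B₊(H) → B₊(H) be a bijective map that preserves absolute continuity in both directions. Then φ preserves singularity in both directions. -/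
open ContinuousLinearMap Filter Topology
open scoped InnerProductSpace ComplexConjugate
set_option linter.unusedSectionVars false
set_option linter.unusedVariables false
set_option synthInstance.maxHeartbeats 1000000
set_option maxHeartbeats 1000000


variable {H : Type} [NormedAddCommGroup H] [InnerProductSpace ℂ H] [CompleteSpace H]

lemma isSym {T : H →L[ℂ] H} (hT : T.IsPositive) (x y : H) : ⟪T x, y⟫_ℂ = ⟪x, T y⟫_ℂ :=
  hT.1 x y

lemma posCS {T : H →L[ℂ] H} (hT : T.IsPositive) (x y : H) :
    ‖⟪T x, y⟫_ℂ‖ ^ 2 ≤ RCLike.re ⟪T x, x⟫_ℂ * RCLike.re ⟪T y, y⟫_ℂ := by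
  let c : PreInnerProductSpace.Core ℂ H :=
  { inner := fun a b => ⟪T a, b⟫_ℂ
    conj_inner_symm := fun a b => by
      show (starRingEnd ℂ) ⟪T b, a⟫_ℂ = ⟪T a, b⟫_ℂ
      rw [inner_conj_symm]; exact (isSym hT a b).symm
    re_inner_nonneg := fun a => hT.2 a
    add_left := fun a b z => by
      show ⟪T (a + b), z⟫_ℂ = ⟪T a, z⟫_ℂ + ⟪T b, z⟫_ℂ
      rw [map_add, inner_add_left]
    smul_left := fun a b r => by
      show ⟪T (r • a), b⟫_ℂ = (starRingEnd ℂ) r * ⟪T a, b⟫_ℂ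
      rw [map_smul, inner_smul_left] }
  have h := InnerProductSpace.Core.inner_mul_inner_self_le (𝕜 := ℂ) (F := H) (c := c) x y
  have h2 : ‖⟪T x, y⟫_ℂ‖ * ‖⟪T y, x⟫_ℂ‖ ≤ RCLike.re ⟪T x, x⟫_ℂ * RCLike.re ⟪T y, y⟫_ℂ := h
  have h3 : ‖⟪T y, x⟫_ℂ‖ = ‖⟪T x, y⟫_ℂ‖ := by
    rw [← inner_conj_symm, isSym hT, RCLike.norm_conj]
  rw [sq]
  calc ‖⟪T x, y⟫_ℂ‖ * ‖⟪T x, y⟫_ℂ‖ = ‖⟪T x, y⟫_ℂ‖ * ‖⟪T y, x⟫_ℂ‖ := by rw [h3]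
    _ ≤ _ := h2



lemma posAppZero {T : H →L[ℂ] H} (hT : T.IsPositive) {x : H}
    (hx : RCLike.re ⟪T x, x⟫_ℂ = 0) : T x = 0 := by
  have h := posCS hT x (T x)
  rw [hx, zero_mul] at h
  have h2 : ⟪T x, T x⟫_ℂ = 0 := by
    have := norm_eq_zero.mp (by nlinarith [norm_nonneg (⟪T x, T x⟫_ℂ), sq_nonneg ‖⟪T x, T x⟫_ℂ‖] :
      ‖⟪T x, T x⟫_ℂ‖ = 0)
    exact this
  exact inner_self_eq_zero.mp h2

lemma loewner_re {A B : H →L[ℂ] H} (h : Loewner A B) (x : H) :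
    RCLike.re ⟪A x, x⟫_ℂ ≤ RCLike.re ⟪B x, x⟫_ℂ := by
  have h2 := h.2 x
  simp only [ContinuousLinearMap.reApplyInnerSelf, ContinuousLinearMap.sub_apply,
    inner_sub_left, map_sub] at h2
  linarith

lemma loewner_of_re {A B : H →L[ℂ] H} (hA : A.IsPositive) (hB : B.IsPositive)
    (h : ∀ x, RCLike.re ⟪A x, x⟫_ℂ ≤ RCLike.re ⟪B x, x⟫_ℂ) : Loewner A B := by
  refine ⟨hB.1.sub hA.1, fun x => ?_⟩
  simp only [ContinuousLinearMap.reApplyInnerSelf, ContinuousLinearMap.sub_apply,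
    inner_sub_left, map_sub]
  linarith [h x]

lemma loewner_refl (A : H →L[ℂ] H) : Loewner A A := by
  unfold Loewner; simpa using ContinuousLinearMap.isPositive_zero

lemma loewner_trans {A B C : H →L[ℂ] H} (h1 : Loewner A B) (h2 : Loewner B C) :
    Loewner A C := by
  have := h2.add h1
  unfold Loewner
  rwa [sub_add_sub_cancel] at this

lemma isPositive_real_smul {r : ℝ} (hr : 0 ≤ r) {B : H →L[ℂ] H} (hB : B.IsPositive) :
    (r • B).IsPositive := by
  rw [ContinuousLinearMap.isPositive_iff_complex]
  intro x
  obtain ⟨h1, h2⟩ := (ContinuousLinearMap.isPositive_iff_complex B).mp hB x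
  have key : ⟪(r • B) x, x⟫_ℂ = r • ⟪B x, x⟫_ℂ := by
    rw [ContinuousLinearMap.smul_apply]
    rw [show (r • (B x) : H) = ((r : ℂ)) • B x from by norm_num [Complex.coe_smul]]
    exact inner_smul_real_left _ _ _
  rw [key, RCLike.smul_re]
  constructor
  · push_cast
    rw [h1]
    simp [Complex.real_smul]
  · positivity

lemma isPositive_of_tendsto {f : ℕ → H →L[ℂ] H} {T : H →L[ℂ] H}
    (hf : ∀ n, (f n).IsPositive)
    (hlim : ∀ x, Tendsto (fun n => f n x) atTop (𝓝 (T x))) : T.IsPositive := by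
  rw [ContinuousLinearMap.isPositive_iff_complex]
  intro x
  have hin : Tendsto (fun n => (⟪f n x, x⟫_ℂ)) atTop (𝓝 ⟪T x, x⟫_ℂ) :=
    (hlim x).inner tendsto_const_nhds
  have hclosed : IsClosed {z : ℂ | ((RCLike.re z : ℝ) : ℂ) = z ∧ 0 ≤ RCLike.re z} :=
    IsClosed.inter (isClosed_eq (RCLike.continuous_ofReal.comp RCLike.continuous_re)
      continuous_id) (isClosed_le continuous_const RCLike.continuous_re)
  exact hclosed.mem_of_tendsto hin (Filter.Eventually.of_forall fun n =>
    (ContinuousLinearMap.isPositive_iff_complex _ |>.mp (hf n)) x)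

lemma loewner_of_mono_tendsto {f : ℕ → H →L[ℂ] H} {C : H →L[ℂ] H}
    (hmono : ∀ m n, m ≤ n → Loewner (f m) (f n))
    (hlim : ∀ x, Tendsto (fun n => f n x) atTop (𝓝 (C x))) (n : ℕ) : Loewner (f n) C := by
  apply isPositive_of_tendsto (f := fun m => f (n + m) - f n)
  · intro m; exact hmono n (n + m) (Nat.le_add_right _ _)
  · intro x
    have h1 : Tendsto (fun m => f (n + m) x) atTop (𝓝 (C x)) := by
      have := (hlim x).comp (tendsto_add_atTop_nat n)
      simpa [Function.comp_def, add_comm] using this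
    simpa using h1.sub (tendsto_const_nhds (x := f n x))

noncomputable def rk (v : H) : H →L[ℂ] H := (innerSL ℂ v).smulRight v

lemma rk_apply (v y : H) : rk v y = ⟪v, y⟫_ℂ • v := rfl

lemma rk_inner (v y : H) : ⟪rk v y, y⟫_ℂ = ((‖⟪v, y⟫_ℂ‖ ^ 2 : ℝ) : ℂ) := by
  rw [rk_apply, inner_smul_left, RCLike.conj_mul]
  norm_cast

lemma rk_pos (v : H) : (rk v).IsPositive := by
  rw [ContinuousLinearMap.isPositive_iff_complex]
  intro x
  rw [rk_inner]
  refine ⟨by norm_cast, ?_⟩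
  rw [show ((((‖⟪v, x⟫_ℂ‖ ^ 2 : ℝ)) : ℂ)) = RCLike.ofReal (K := ℂ) (‖⟪v, x⟫_ℂ‖ ^ 2) from rfl,
    RCLike.ofReal_re]
  positivity

lemma re_coe (r : ℝ) : RCLike.re ((r : ℝ) : ℂ) = r := by
  rw [show ((r : ℝ) : ℂ) = RCLike.ofReal (K := ℂ) r from rfl, RCLike.ofReal_re]

lemma smul_apply_inner (r : ℝ) (B : H →L[ℂ] H) (x y : H) :
    ⟪(r • B) x, y⟫_ℂ = r • ⟪B x, y⟫_ℂ := by
  rw [ContinuousLinearMap.smul_apply,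
    show (r • (B x) : H) = ((r : ℂ)) • B x from by norm_num [Complex.coe_smul]]
  exact inner_smul_real_left _ _ _

lemma smul_re_inner (r : ℝ) (B : H →L[ℂ] H) (x y : H) :
    RCLike.re ⟪(r • B) x, y⟫_ℂ = r * RCLike.re ⟪B x, y⟫_ℂ := by
  rw [smul_apply_inner, RCLike.smul_re]

lemma loewner_smul_mono {P Q : H →L[ℂ] H} {r : ℝ} (hr : 0 ≤ r) (h : Loewner P Q) :
    Loewner (r • P) (r • Q) := by
  unfold Loewner at h ⊢
  rw [← smul_sub]
  exact isPositive_real_smul hr h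

lemma loewner_smul_le {r t : ℝ} (hr : 0 ≤ r) (hrt : r ≤ t) {A : H →L[ℂ] H}
    (hA : A.IsPositive) : Loewner (r • A) (t • A) := by
  unfold Loewner
  rw [← sub_smul]
  exact isPositive_real_smul (by linarith) hA

lemma rk_le {C : H →L[ℂ] H} (hC : C.IsPositive) (x : H) :
    Loewner (rk (C x)) ((RCLike.re ⟪C x, x⟫_ℂ) • C) := by
  apply loewner_of_re (rk_pos _) (isPositive_real_smul (hC.2 x) hC)
  intro y
  rw [rk_inner, re_coe, smul_re_inner]
  exact posCS hC x y

lemma eq_zero_of_loewner_zero {C : H →L[ℂ] H} (hC : C.IsPositive)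
    (h : Loewner C 0) : C = 0 := by
  ext y
  refine posAppZero hC (le_antisymm ?_ (hC.2 y))
  have := loewner_re h y
  simpa using this

lemma rk_eq_zero_iff {v : H} : rk v = 0 ↔ v = 0 := by
  constructor
  · intro h
    by_contra hv
    have h2 : rk v v = 0 := by rw [h]; rfl
    rw [rk_apply, smul_eq_zero] at h2
    rcases h2 with h2 | h2
    · exact hv (inner_self_eq_zero.mp h2)
    · exact hv h2
  · rintro rfl
    ext y
    simp [rk_apply]

lemma loewner_rk {h : H →L[ℂ] H} (hh : h.IsPositive) {v : H} {e : ℝ}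
    (hle : Loewner h (e • rk v)) : ∃ s : ℝ, 0 ≤ s ∧ h = s • rk v := by
  have hker : ∀ y, ⟪v, y⟫_ℂ = 0 → h y = 0 := by
    intro y hy
    refine posAppZero hh (le_antisymm ?_ (hh.2 y))
    have h1 := loewner_re hle y
    rw [smul_re_inner, rk_inner, hy, norm_zero, re_coe] at h1
    simpa using h1
  by_cases hv : v = 0
  · refine ⟨0, le_refl 0, ?_⟩
    rw [zero_smul]
    exact eq_zero_of_loewner_zero hh (by
      have : (e • rk v) = 0 := by rw [hv, rk_eq_zero_iff.mpr rfl, smul_zero]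
      rwa [this] at hle)
  · set c : ℂ := ((‖v‖ : ℝ) : ℂ) ^ 2 with hcdef
    have hc : ⟪v, v⟫_ℂ = c := inner_self_eq_norm_sq_to_K v
    have hc0 : c ≠ 0 := by
      rw [hcdef]
      exact pow_ne_zero 2 (Complex.ofReal_ne_zero.mpr (norm_ne_zero_iff.mpr hv))
    set μ : ℂ := ⟪v, h v⟫_ℂ / c with hμdef
    have hμv : h v = μ • v := by
      set u := h v - μ • v with hudef
      have hvu : ⟪v, u⟫_ℂ = 0 := by
        rw [hudef, inner_sub_right, inner_smul_right, hc, hμdef]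
        field_simp
        ring
      have hu : h u = 0 := hker u hvu
      have huu : ⟪u, u⟫_ℂ = 0 := by
        have e1 : ⟪u, h v⟫_ℂ = 0 := by
          rw [← isSym hh u v, hu, inner_zero_left]
        have e2 : ⟪u, v⟫_ℂ = 0 := by
          rw [← inner_conj_symm, hvu, map_zero]
        have key : ∀ w, ⟪w, u⟫_ℂ = ⟪w, h v⟫_ℂ - μ * ⟪w, v⟫_ℂ := fun w => by
          rw [hudef, inner_sub_right, inner_smul_right]
        rw [key u, e1, e2, mul_zero, sub_zero]
      have : u = 0 := inner_self_eq_zero.mp huu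
      rw [hudef, sub_eq_zero] at this
      exact this
    have hμreal : ((RCLike.re μ : ℝ) : ℂ) = μ := by
      have hreal : (starRingEnd ℂ) ⟪v, h v⟫_ℂ = ⟪v, h v⟫_ℂ := by
        rw [inner_conj_symm, isSym hh]
      have : (starRingEnd ℂ) μ = μ := by
        rw [hμdef, map_div₀, hreal, hcdef, ← Complex.ofReal_pow, Complex.conj_ofReal]
      exact Complex.conj_eq_iff_re.mp this
    have hμnonneg : 0 ≤ RCLike.re μ := by
      have h1 : 0 ≤ RCLike.re ⟪h v, v⟫_ℂ := hh.2 v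
      have h2 : ⟪h v, v⟫_ℂ = μ * c := by
        rw [hμv, inner_smul_left, hc,
          show (starRingEnd ℂ) μ = μ from by rw [← hμreal]; exact Complex.conj_ofReal _]
      have h3 : (μ * c : ℂ) = ((RCLike.re μ * ‖v‖ ^ 2 : ℝ) : ℂ) := by
        rw [← hμreal, hcdef]
        push_cast
        simp only [re_coe]
      rw [h2, h3, re_coe] at h1
      have hnv : (0 : ℝ) < ‖v‖ ^ 2 := pow_pos (norm_pos_iff.mpr hv) 2
      nlinarith
    set s : ℝ := RCLike.re μ / ‖v‖ ^ 2 with hsdef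
    have hsC : ((s : ℝ) : ℂ) = μ / c := by
      rw [hsdef, hcdef, ← hμreal]
      push_cast
      simp only [re_coe]
    refine ⟨s, by rw [hsdef]; exact div_nonneg hμnonneg (sq_nonneg ‖v‖), ?_⟩
    ext y
    have hw : ⟪v, y - (⟪v, y⟫_ℂ / c) • v⟫_ℂ = 0 := by
      rw [inner_sub_right, inner_smul_right, hc]
      field_simp
      ring
    have h0 := hker _ hw
    rw [map_sub, map_smul, sub_eq_zero] at h0
    show h y = (s • rk v) y
    rw [h0, hμv, smul_smul, ContinuousLinearMap.smul_apply, rk_apply,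
      show (s • (⟪v, y⟫_ℂ • v) : H) = ((s : ℂ) * ⟪v, y⟫_ℂ) • v from by
        rw [← smul_smul, Complex.coe_smul]]
    congr 1
    rw [hsC]
    field_simp


lemma absCont_of_loewner {A B : H →L[ℂ] H} (hA : A.IsPositive) {c : ℝ} (hc : 0 ≤ c)
    (h : Loewner A (c • B)) : AbsCont A B :=
  ⟨fun _ => A, fun _ => hA, fun _ _ _ => loewner_refl A, fun _ => ⟨c, hc, h⟩,
    fun _ => tendsto_const_nhds⟩

lemma zero_absCont (B : H →L[ℂ] H) : AbsCont 0 B := by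
  refine absCont_of_loewner ContinuousLinearMap.isPositive_zero (le_refl (0:ℝ)) ?_
  rw [zero_smul]
  exact loewner_refl 0

lemma eq_zero_of_absCont_zero {E : H →L[ℂ] H} (h : AbsCont E (0 : H →L[ℂ] H)) : E = 0 := by
  obtain ⟨f, hfpos, -, hdom, hlim⟩ := h
  have hz : ∀ n, f n = 0 := by
    intro n
    obtain ⟨c, -, hle⟩ := hdom n
    rw [smul_zero] at hle
    exact eq_zero_of_loewner_zero (hfpos n) hle
  ext x
  have := hlim x
  simp only [hz, ContinuousLinearMap.zero_apply] at this
  exact (tendsto_nhds_unique tendsto_const_nhds this).symm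

def ZeroP (C : H →L[ℂ] H) : Prop := ∀ E : H →L[ℂ] H, E.IsPositive → AbsCont C E

lemma zeroP_iff {C : H →L[ℂ] H} : ZeroP C ↔ C = 0 := by
  constructor
  · intro h
    exact eq_zero_of_absCont_zero (h 0 ContinuousLinearMap.isPositive_zero)
  · rintro rfl
    exact fun E _ => zero_absCont E

def AtomicP (C : H →L[ℂ] H) : Prop :=
  ∀ D : H →L[ℂ] H, D.IsPositive → AbsCont D C → (ZeroP D ∨ AbsCont C D)

def Psi (A B : H →L[ℂ] H) : Prop :=
  ∀ C : H →L[ℂ] H, C.IsPositive → AtomicP C → AbsCont C A → AbsCont C B → ZeroP C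

lemma absCont_rk {E : H →L[ℂ] H} {v : H} (hE : E.IsPositive) (h : AbsCont E (rk v)) :
    ∃ s : ℝ, 0 ≤ s ∧ E = s • rk v := by
  obtain ⟨f, hfpos, hfmono, hfdom, hflim⟩ := h
  have hrep : ∀ n, ∃ s : ℝ, 0 ≤ s ∧ f n = s • rk v := by
    intro n
    obtain ⟨c, hc0, hcle⟩ := hfdom n
    exact loewner_rk (hfpos n) hcle
  choose s hs0 hsrep using hrep
  by_cases hv : v = 0
  · refine ⟨0, le_refl 0, ?_⟩
    have hz : ∀ n, f n = 0 := by
      intro n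
      rw [hsrep n, rk_eq_zero_iff.mpr hv, smul_zero]
    rw [rk_eq_zero_iff.mpr hv, smul_zero]
    ext x
    have := hflim x
    simp only [hz, ContinuousLinearMap.zero_apply] at this
    exact (tendsto_nhds_unique tendsto_const_nhds this).symm
  · have hfv : ∀ n, RCLike.re ⟪f n v, v⟫_ℂ = s n * ‖v‖ ^ 4 := by
      intro n
      rw [hsrep n, smul_re_inner, rk_inner, re_coe, inner_self_eq_norm_sq_to_K]
      simp only [norm_pow, RCLike.norm_ofReal, Complex.norm_real, Real.norm_eq_abs, abs_norm]
      ring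
    set σ := RCLike.re ⟪E v, v⟫_ℂ / ‖v‖ ^ 4 with hσ
    have hconv : Tendsto s atTop (𝓝 σ) := by
      have h1 : Tendsto (fun n => ⟪f n v, v⟫_ℂ) atTop (𝓝 ⟪E v, v⟫_ℂ) :=
        (hflim v).inner tendsto_const_nhds
      have h2 : Tendsto (fun n => RCLike.re ⟪f n v, v⟫_ℂ) atTop
          (𝓝 (RCLike.re ⟪E v, v⟫_ℂ)) := (RCLike.continuous_re.tendsto _).comp h1
      have h3 := h2.div_const (‖v‖ ^ 4)
      have hv4 : (0:ℝ) < ‖v‖ ^ 4 := pow_pos (norm_pos_iff.mpr hv) 4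
      have hseq : s = fun n => RCLike.re ⟪f n v, v⟫_ℂ / ‖v‖ ^ 4 := funext fun n => by
        rw [hfv n]
        field_simp
      rw [hseq]
      exact h3
    refine ⟨σ, ge_of_tendsto' hconv hs0, ?_⟩
    ext y
    have h4 : Tendsto (fun n => f n y) atTop (𝓝 ((σ • rk v) y)) := by
      have he : (fun n => f n y) = fun n => s n • (rk v y) := funext fun n => by
        rw [hsrep n]; rfl
      rw [he, ContinuousLinearMap.smul_apply]
      exact hconv.smul_const _
    exact tendsto_nhds_unique (hflim y) h4

lemma rk_absCont_dom {w : H} {B : H →L[ℂ] H} (h : AbsCont (rk w) B) :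
    ∃ β : ℝ, 0 ≤ β ∧ Loewner (rk w) (β • B) := by
  by_cases hw : w = 0
  · refine ⟨0, le_refl 0, ?_⟩
    rw [rk_eq_zero_iff.mpr hw, zero_smul]
    exact loewner_refl 0
  · obtain ⟨g, hgpos, hgmono, hgdom, hglim⟩ := h
    have hgle : ∀ m, Loewner (g m) (rk w) := loewner_of_mono_tendsto hgmono hglim
    have hrep : ∀ m, ∃ t : ℝ, 0 ≤ t ∧ g m = t • rk w := by
      intro m
      refine loewner_rk (hgpos m) (e := 1) ?_
      rw [one_smul]
      exact hgle m
    choose t ht0 htrep using hrep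
    have hw4 : (0:ℝ) < ‖w‖ ^ 4 := pow_pos (norm_pos_iff.mpr hw) 4
    have hval : RCLike.re ⟪rk w w, w⟫_ℂ = ‖w‖ ^ 4 := by
      rw [rk_inner, re_coe, inner_self_eq_norm_sq_to_K]
      simp only [norm_pow, RCLike.norm_ofReal, Real.norm_eq_abs, abs_norm]
      ring
    have hgv : ∀ m, RCLike.re ⟪g m w, w⟫_ℂ = t m * ‖w‖ ^ 4 := by
      intro m
      rw [htrep m, smul_re_inner, hval]
    have hconv : Tendsto t atTop (𝓝 1) := by
      have h1 : Tendsto (fun m => RCLike.re ⟪g m w, w⟫_ℂ) atTop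
          (𝓝 (RCLike.re ⟪rk w w, w⟫_ℂ)) :=
        (RCLike.continuous_re.tendsto _).comp ((hglim w).inner tendsto_const_nhds)
      have h2 := h1.div_const (‖w‖ ^ 4)
      have hteq : t = fun m => RCLike.re ⟪g m w, w⟫_ℂ / ‖w‖ ^ 4 := funext fun m => by
        rw [hgv m]
        field_simp
      rw [hteq]
      have : RCLike.re ⟪rk w w, w⟫_ℂ / ‖w‖ ^ 4 = 1 := by
        rw [hval]
        field_simp
      rwa [this] at h2
    obtain ⟨m, hm⟩ := (hconv.eventually (lt_mem_nhds (by norm_num : (1:ℝ)/2 < 1))).exists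
    have htm : (0:ℝ) < t m := by linarith
    obtain ⟨c, hc0, hcle⟩ := hgdom m
    have hwrk : rk w = (t m)⁻¹ • g m := by
      rw [htrep m, smul_smul, inv_mul_cancel₀ (ne_of_gt htm), one_smul]
    refine ⟨(t m)⁻¹ * c, mul_nonneg (inv_nonneg.mpr (le_of_lt htm)) hc0, ?_⟩
    rw [hwrk, ← smul_smul]
    exact loewner_smul_mono (inv_nonneg.mpr (le_of_lt htm)) hcle

lemma exists_re_pos {C : H →L[ℂ] H} (hC : C.IsPositive) (h0 : C ≠ 0) :
    ∃ x, 0 < RCLike.re ⟪C x, x⟫_ℂ := by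
  by_contra hx
  push_neg at hx
  apply h0
  ext y
  exact posAppZero hC (le_antisymm (hx y) (hC.2 y))

lemma loewner_scale {C A : H →L[ℂ] H} (hA : A.IsPositive) {α γ : ℝ} (hα : 0 ≤ α)
    (hγ : 0 < γ) (hαγ : α ≤ γ) (h : Loewner C (α • A)) : Loewner (γ⁻¹ • C) A := by
  have h1 := loewner_smul_mono (inv_nonneg.mpr hγ.le) h
  rw [smul_smul] at h1
  have hle1 : γ⁻¹ * α ≤ 1 := by
    have := mul_le_mul_of_nonneg_left hαγ (inv_nonneg.mpr hγ.le)
    rwa [inv_mul_cancel₀ hγ.ne'] at this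
  have h2 : Loewner ((γ⁻¹ * α) • A) ((1:ℝ) • A) :=
    loewner_smul_le (by positivity) hle1 hA
  rw [one_smul] at h2
  exact loewner_trans h1 h2

lemma singular_iff_psi {A B : H →L[ℂ] H} (hA : A.IsPositive) (hB : B.IsPositive) :
    Singular A B ↔ Psi A B := by
  constructor
  · intro hsing C hC hAt hCA hCB
    rw [zeroP_iff]
    by_contra hC0
    obtain ⟨x, hx⟩ := exists_re_pos hC hC0
    obtain ⟨f, hfpos, hfmono, hfdom, hflim⟩ := hCA
    have hfleC : ∀ n, Loewner (f n) C := loewner_of_mono_tendsto hfmono hflim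
    have hlim2 : Tendsto (fun n => RCLike.re ⟪f n x, x⟫_ℂ) atTop
        (𝓝 (RCLike.re ⟪C x, x⟫_ℂ)) :=
      (RCLike.continuous_re.tendsto _).comp ((hflim x).inner tendsto_const_nhds)
    obtain ⟨n, hn⟩ := (hlim2.eventually (lt_mem_nhds (half_lt_self hx))).exists
    have hn0 : 0 < RCLike.re ⟪f n x, x⟫_ℂ := lt_trans (half_pos hx) hn
    set v := f n x with hv
    have hvne : v ≠ 0 := by
      intro h
      rw [h] at hn0
      simp at hn0
    set lam := RCLike.re ⟪f n x, x⟫_ℂ with hlam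
    have hrk1 : Loewner (rk v) (lam • f n) := rk_le (hfpos n) x
    have hrk2 : Loewner (rk v) (lam • C) :=
      loewner_trans hrk1 (loewner_smul_mono hn0.le (hfleC n))
    have hrkC : AbsCont (rk v) C := absCont_of_loewner (rk_pos v) hn0.le hrk2
    rcases hAt (rk v) (rk_pos v) hrkC with hz | hCD
    · exact hvne (rk_eq_zero_iff.mp (zeroP_iff.mp hz))
    · obtain ⟨s, hs0, hCs⟩ := absCont_rk hC hCD
      have hspos : 0 < s := by
        rcases lt_or_eq_of_le hs0 with h | h
        · exact h
        · exfalso; apply hC0; rw [hCs, ← h, zero_smul]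
      obtain ⟨cn, hcn0, hcnle⟩ := hfdom n
      have hCA' : Loewner C ((s * lam * cn) • A) := by
        rw [hCs]
        have h1 : Loewner (rk v) (lam • (cn • A)) :=
          loewner_trans hrk1 (loewner_smul_mono hn0.le hcnle)
        have h2 := loewner_smul_mono hs0 h1
        rwa [smul_smul, smul_smul] at h2
      have hw : (s • rk v : H →L[ℂ] H) = rk (Real.sqrt s • v) := by
        ext y
        rw [ContinuousLinearMap.smul_apply, rk_apply, rk_apply,
          show (Real.sqrt s • v : H) = ((Real.sqrt s : ℝ) : ℂ) • v from by
            norm_num [Complex.coe_smul],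
          inner_smul_left, smul_smul,
          show (s • (⟪v, y⟫_ℂ • v) : H) = ((s : ℝ) : ℂ) • ⟪v, y⟫_ℂ • v from by
            rw [Complex.coe_smul],
          smul_smul]
        congr 1
        rw [Complex.conj_ofReal]
        have hss : ((Real.sqrt s : ℝ) : ℂ) * ((Real.sqrt s : ℝ) : ℂ) = ((s : ℝ) : ℂ) := by
          norm_cast
          exact Real.mul_self_sqrt hs0
        rw [← hss]
        ring
      have hCB2 : AbsCont (rk (Real.sqrt s • v)) B := by rw [← hw, ← hCs]; exact hCB
      obtain ⟨β, hβ0, hβle⟩ := rk_absCont_dom hCB2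
      have hCB' : Loewner C (β • B) := by rw [hCs, hw]; exact hβle
      set α := s * lam * cn with hα
      have hα0 : 0 ≤ α := by positivity
      set γ := max α β with hγ
      have hγ0 : 0 ≤ γ := le_trans hα0 (le_max_left _ _)
      rcases hγ0.lt_or_eq with hγpos | hγzero
      · have hDpos : (γ⁻¹ • C).IsPositive := isPositive_real_smul (inv_nonneg.mpr hγ0) hC
        have hDA : Loewner (γ⁻¹ • C) A := loewner_scale hA hα0 hγpos (le_max_left _ _) hCA'
        have hDB : Loewner (γ⁻¹ • C) B := loewner_scale hB hβ0 hγpos (le_max_right _ _) hCB'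
        have hD0 := hsing _ hDpos hDA hDB
        rcases smul_eq_zero.mp hD0 with h | h
        · exact (inv_ne_zero hγpos.ne') h
        · exact hC0 h
      · have hαz : α = 0 := le_antisymm (hγzero ▸ le_max_left _ _) hα0
        rw [hαz, zero_smul] at hCA'
        exact hC0 (eq_zero_of_loewner_zero hC hCA')
  · intro hpsi C hC hCleA hCleB
    by_contra hC0
    obtain ⟨x, hx⟩ := exists_re_pos hC hC0
    set v := C x with hv
    have hvne : v ≠ 0 := by
      intro h
      rw [h] at hx
      simp at hx
    have h1 : Loewner (rk v) ((RCLike.re ⟪C x, x⟫_ℂ) • C) := rk_le hC x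
    have hDA : AbsCont (rk v) A :=
      absCont_of_loewner (rk_pos v) hx.le
        (loewner_trans h1 (loewner_smul_mono hx.le hCleA))
    have hDB : AbsCont (rk v) B :=
      absCont_of_loewner (rk_pos v) hx.le
        (loewner_trans h1 (loewner_smul_mono hx.le hCleB))
    have hAt : AtomicP (rk v) := by
      intro E hE hED
      obtain ⟨su, hsu0, hEs⟩ := absCont_rk hE hED
      rcases eq_or_lt_of_le hsu0 with h | h
      · left; rw [zeroP_iff, hEs, ← h, zero_smul]
      · right
        have heq : rk v = su⁻¹ • E := by
          rw [hEs, smul_smul, inv_mul_cancel₀ h.ne', one_smul]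
        refine absCont_of_loewner (rk_pos v) (inv_nonneg.mpr h.le) ?_
        rw [heq]
        exact loewner_refl _
    have := hpsi (rk v) (rk_pos v) hAt hDA hDB
    exact hvne (rk_eq_zero_iff.mp (zeroP_iff.mp this))

/-- A bijection of the positive cone of an infinite-dimensional complex
Hilbert space preserving absolute continuity in both directions preserves singularity
in both directions. -/
theorem stmt4 (hinf : ¬ FiniteDimensional ℂ H)
    (φ : (H →L[ℂ] H) → (H →L[ℂ] H))
    (hbij : Set.BijOn φ {A | A.IsPositive} {A | A.IsPositive})
    (hac : ∀ A B : H →L[ℂ] H, A.IsPositive → B.IsPositive →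
        (AbsCont A B ↔ AbsCont (φ A) (φ B))) :
    ∀ A B : H →L[ℂ] H, A.IsPositive → B.IsPositive →
      (Singular A B ↔ Singular (φ A) (φ B)) := by
  intro A B hA hB
  have hMT : ∀ {X : H →L[ℂ] H}, X.IsPositive → (φ X).IsPositive := fun hX => hbij.mapsTo hX
  have hSurj : ∀ {Y : H →L[ℂ] H}, Y.IsPositive → ∃ X, X.IsPositive ∧ φ X = Y := by
    intro Y hY
    obtain ⟨X, hX, hXY⟩ := hbij.surjOn hY
    exact ⟨X, hX, hXY⟩
  have hZero : ∀ C : H →L[ℂ] H, C.IsPositive → (ZeroP C ↔ ZeroP (φ C)) := by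
    intro C hC
    constructor
    · intro h E' hE'
      obtain ⟨E, hE, rfl⟩ := hSurj hE'
      exact (hac C E hC hE).mp (h E hE)
    · intro h E hE
      exact (hac C E hC hE).mpr (h (φ E) (hMT hE))
  have hAtom : ∀ C : H →L[ℂ] H, C.IsPositive → (AtomicP C ↔ AtomicP (φ C)) := by
    intro C hC
    constructor
    · intro h D' hD' hD'C
      obtain ⟨D, hD, rfl⟩ := hSurj hD'
      rcases h D hD ((hac D C hD hC).mpr hD'C) with hz | hcd
      · exact Or.inl ((hZero D hD).mp hz)
      · exact Or.inr ((hac C D hC hD).mp hcd)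
    · intro h D hD hDC
      rcases h (φ D) (hMT hD) ((hac D C hD hC).mp hDC) with hz | hcd
      · exact Or.inl ((hZero D hD).mpr hz)
      · exact Or.inr ((hac C D hC hD).mpr hcd)
  have hPsi : Psi A B ↔ Psi (φ A) (φ B) := by
    constructor
    · intro h C' hC' hat hca hcb
      obtain ⟨C, hC, rfl⟩ := hSurj hC'
      exact (hZero C hC).mp (h C hC ((hAtom C hC).mpr hat)
        ((hac C A hC hA).mpr hca) ((hac C B hC hB).mpr hcb))
    · intro h C hC hat hca hcb
      exact (hZero C hC).mpr (h (φ C) (hMT hC) ((hAtom C hC).mp hat)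
        ((hac C A hC hA).mp hca) ((hac C B hC hB).mp hcb))
  rw [singular_iff_psi hA hB, hPsi, ← singular_iff_psi (hMT hA) (hMT hB)]
end

section
/- Let H be a complex Hilbert space. For A ∈ B₊(H), set A^⊥ := {C ∈ B₊(H) : C ⊥ A}. Then for all A, B ∈ B₊(H): A^⊥ = B^⊥ if and only if ran A^{1/2} = ran B^{1/2}. -/
set_option synthInstance.maxHeartbeats 1000000
set_option maxHeartbeats 1000000

open ContinuousLinearMap Filter Topology

variable {H : Type} [NormedAddCommGroup H] [InnerProductSpace ℂ H] [CompleteSpace H]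

section Aux

local notation "⟪" x ", " y "⟫" => @inner ℂ _ _ x y

lemma isPositive_smul_r {c : ℝ} (hc : 0 ≤ c) {T : H →L[ℂ] H} (hT : T.IsPositive) :
    (c • T).IsPositive := by
  constructor
  · exact isSelfAdjoint_iff_isSymmetric.mp ((IsSelfAdjoint.all c).smul hT.isSelfAdjoint)
  · intro y
    have := hT.2 y
    simp only [reApplyInnerSelf, ContinuousLinearMap.smul_apply] at this ⊢
    rw [RCLike.real_smul_eq_coe_smul (K := ℂ), inner_smul_left]
    simp only [RCLike.star_def, RCLike.conj_ofReal, RCLike.re_ofReal_mul]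
    exact mul_nonneg hc this

lemma sqrt_isPositive' {A : H →L[ℂ] H} (hA : A.IsPositive) : (CFC.sqrt A).IsPositive :=
  (nonneg_iff_isPositive _).mp (CFC.sqrt_nonneg _)

lemma sqrt_mul_self'' {A : H →L[ℂ] H} (hA : A.IsPositive) :
    ∀ y, CFC.sqrt A (CFC.sqrt A y) = A y := by
  intro y
  have h := CFC.sqrt_mul_sqrt_self A ((nonneg_iff_isPositive A).mpr hA)
  calc CFC.sqrt A (CFC.sqrt A y) = (CFC.sqrt A * CFC.sqrt A) y := rfl
    _ = A y := by rw [h]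

lemma norm_sqrt_apply_sq' {A : H →L[ℂ] H} (hA : A.IsPositive) (y : H) :
    ‖CFC.sqrt A y‖ ^ 2 = RCLike.re ⟪A y, y⟫ := by
  have h : ⟪A y, y⟫ = ⟪CFC.sqrt A y, CFC.sqrt A y⟫ := by
    rw [← sqrt_mul_self'' hA y]
    exact (sqrt_isPositive' hA).isSelfAdjoint.isSymmetric _ _
  rw [h]
  exact (inner_self_eq_norm_sq _).symm

/-- Douglas-type lemma: if `⟪x, ·⟫` is dominated by `‖T ·‖`, then `x ∈ ran T`. -/
lemma mem_range_of_inner_le (T : H →L[ℂ] H) (hT : IsSelfAdjoint T) (x : H) (K : ℝ)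
    (h : ∀ y, ‖(inner ℂ x y : ℂ)‖ ≤ K * ‖T y‖) : ∃ u, T u = x := by
  set f : H →ₗ[ℂ] H := (T : H →ₗ[ℂ] H)
  have hker : LinearMap.ker f ≤ LinearMap.ker (innerSL ℂ x).toLinearMap := by
    intro y hy
    have hy' : T y = 0 := hy
    have := h y
    rw [hy', norm_zero, mul_zero] at this
    simpa [LinearMap.mem_ker] using norm_le_zero_iff.mp this
  set φ : LinearMap.range f →ₗ[ℂ] ℂ :=
    (Submodule.liftQ (LinearMap.ker f) (innerSL ℂ x).toLinearMap hker).comp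
      (LinearMap.quotKerEquivRange f).symm.toLinearMap
  have hφ : ∀ y : H, φ ⟨T y, LinearMap.mem_range_self f y⟩ = inner ℂ x y := by
    intro y
    have : (LinearMap.quotKerEquivRange f).symm ⟨T y, LinearMap.mem_range_self f y⟩
        = Submodule.Quotient.mk y := by
      rw [LinearEquiv.symm_apply_eq]
      ext
      simp only [LinearMap.quotKerEquivRange_apply_mk]
      rfl
    simp [φ, this]
  have hbd : ∀ z : LinearMap.range f, ‖φ z‖ ≤ K * ‖z‖ := by
    rintro ⟨z, ⟨y, rfl⟩⟩
    have h2 : φ ⟨f y, ⟨y, rfl⟩⟩ = inner ℂ x y := hφ y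
    rw [h2]
    exact h y
  set φc : LinearMap.range f →L[ℂ] ℂ := LinearMap.mkContinuous φ K hbd
  obtain ⟨g, hg, -⟩ := exists_extension_norm_eq (LinearMap.range f) φc
  set u := (InnerProductSpace.toDual ℂ H).symm g
  refine ⟨u, ext_inner_right ℂ fun y => ?_⟩
  have h1 : (inner ℂ (T u) y : ℂ) = inner ℂ u (T y) := by
    nth_rewrite 1 [← hT.adjoint_eq]
    exact ContinuousLinearMap.adjoint_inner_left T y u
  have h2 : (inner ℂ u (T y) : ℂ) = g (T y) := InnerProductSpace.toDual_symm_apply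
  rw [h1, h2, hg ⟨T y, LinearMap.mem_range_self f y⟩]
  exact hφ y

/-- If `D ≤ C` (Loewner), then `ran √D ⊆ ran √C`. -/
lemma range_sqrt_mono {D C : H →L[ℂ] H} (hD : D.IsPositive) (hC : C.IsPositive)
    (hle : (C - D).IsPositive) : Set.range ⇑(CFC.sqrt D) ⊆ Set.range ⇑(CFC.sqrt C) := by
  rintro x ⟨u, rfl⟩
  refine mem_range_of_inner_le (CFC.sqrt C) (sqrt_isPositive' hC).isSelfAdjoint
    (CFC.sqrt D u) ‖u‖ (fun y => ?_)
  have h1 : (⟪CFC.sqrt D u, y⟫ : ℂ) = ⟪u, CFC.sqrt D y⟫ :=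
    (sqrt_isPositive' hD).isSelfAdjoint.isSymmetric _ _
  have h2 : ‖(⟪u, CFC.sqrt D y⟫ : ℂ)‖ ≤ ‖u‖ * ‖CFC.sqrt D y‖ := norm_inner_le_norm _ _
  have h3 : ‖CFC.sqrt D y‖ ≤ ‖CFC.sqrt C y‖ := by
    have := hle.2 y
    simp only [reApplyInnerSelf, ContinuousLinearMap.sub_apply, inner_sub_left, map_sub,
      sub_nonneg] at this
    have h4 : ‖CFC.sqrt D y‖ ^ 2 ≤ ‖CFC.sqrt C y‖ ^ 2 := by
      rw [norm_sqrt_apply_sq' hD, norm_sqrt_apply_sq' hC]; exact this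
    exact (pow_le_pow_iff_left₀ (norm_nonneg _) (norm_nonneg _) two_ne_zero).mp h4
  calc ‖(⟪CFC.sqrt D u, y⟫ : ℂ)‖ = ‖(⟪u, CFC.sqrt D y⟫ : ℂ)‖ := by rw [h1]
    _ ≤ ‖u‖ * ‖CFC.sqrt D y‖ := h2
    _ ≤ ‖u‖ * ‖CFC.sqrt C y‖ := mul_le_mul_of_nonneg_left h3 (norm_nonneg _)

/-- The rank-one positive operator `y ↦ ⟪x, y⟫ • x`. -/
noncomputable def rankOne (x : H) : H →L[ℂ] H := (innerSL ℂ x).smulRight x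

lemma rankOne_apply (x y : H) : rankOne x y = (⟪x, y⟫ : ℂ) • x := rfl

lemma rankOne_isPositive (x : H) : (rankOne x).IsPositive := by
  constructor
  · show (rankOne x : H →ₗ[ℂ] H).IsSymmetric
    intro y z
    simp only [coe_coe, rankOne_apply, inner_smul_left, inner_smul_right]
    rw [show (starRingEnd ℂ) (⟪x, y⟫ : ℂ) = ⟪y, x⟫ from inner_conj_symm y x]
    ring
  · intro y
    rw [reApplyInnerSelf_apply, rankOne_apply, inner_smul_left]
    rw [RCLike.conj_mul]
    simp only [← RCLike.ofReal_pow, RCLike.ofReal_re]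
    positivity

lemma rankOne_le_of_eq_sqrt {C : H →L[ℂ] H} (hC : C.IsPositive) {x u : H}
    (hx : CFC.sqrt C u = x) : (‖u‖ ^ 2 • C - rankOne x).IsPositive := by
  constructor
  · exact isSelfAdjoint_iff_isSymmetric.mp (((IsSelfAdjoint.all (‖u‖ ^ 2 : ℝ)).smul hC.isSelfAdjoint).sub (rankOne_isPositive x).isSelfAdjoint)
  · intro y
    rw [reApplyInnerSelf_apply]
    simp only [ContinuousLinearMap.sub_apply, inner_sub_left, map_sub,
      sub_nonneg, ContinuousLinearMap.smul_apply, rankOne_apply, inner_smul_left]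
    rw [RCLike.conj_mul, RCLike.real_smul_eq_coe_smul (K := ℂ), inner_smul_left,
      RCLike.conj_ofReal, RCLike.re_ofReal_mul]
    simp only [← RCLike.ofReal_pow, RCLike.ofReal_re]
    have h1 : ‖(⟪x, y⟫ : ℂ)‖ ≤ ‖u‖ * ‖CFC.sqrt C y‖ := by
      rw [← hx]
      have : (⟪CFC.sqrt C u, y⟫ : ℂ) = ⟪u, CFC.sqrt C y⟫ :=
        (sqrt_isPositive' hC).isSelfAdjoint.isSymmetric _ _
      rw [this]
      exact norm_inner_le_norm _ _
    have h2 : ‖(⟪x, y⟫ : ℂ)‖ ^ 2 ≤ ‖u‖ ^ 2 * ‖CFC.sqrt C y‖ ^ 2 := by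
      rw [← mul_pow]
      exact pow_le_pow_left₀ (norm_nonneg _) h1 2
    calc ‖(⟪x, y⟫ : ℂ)‖ ^ 2 ≤ ‖u‖ ^ 2 * ‖CFC.sqrt C y‖ ^ 2 := h2
      _ = ‖u‖ ^ 2 * RCLike.re (⟪C y, y⟫ : ℂ) := by rw [norm_sqrt_apply_sq' hC]

lemma sqrt_rankOne {x : H} (hx : x ≠ 0) : CFC.sqrt (rankOne x) = ‖x‖⁻¹ • rankOne x := by
  have hnx : (‖x‖ : ℝ) ≠ 0 := norm_ne_zero_iff.mpr hx
  apply CFC.sqrt_unique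
  · ext y
    simp only [ContinuousLinearMap.mul_apply, ContinuousLinearMap.smul_apply, rankOne_apply,
      RCLike.real_smul_eq_coe_smul (K := ℂ), inner_smul_right, inner_self_eq_norm_sq_to_K,
      smul_smul]
    congr 1
    have hnxc : (‖x‖ : ℂ) ≠ 0 := by exact_mod_cast hnx
    push_cast
    field_simp
    exact mul_div_cancel_left₀ _ hnxc
  · exact (nonneg_iff_isPositive _).mpr
      (isPositive_smul_r (inv_nonneg.mpr (norm_nonneg x)) (rankOne_isPositive x))

/-- Characterization of singularity via ranges of square roots. -/
lemma singular_iff_range {C A : H →L[ℂ] H} (hC : C.IsPositive) (hA : A.IsPositive) :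
    Singular C A ↔
      ∀ x, x ∈ Set.range ⇑(CFC.sqrt C) → x ∈ Set.range ⇑(CFC.sqrt A) → x = 0 := by
  constructor
  · intro h x hxC hxA
    by_contra hx0
    obtain ⟨u, hu⟩ := hxC
    obtain ⟨v, hv⟩ := hxA
    set t : ℝ := max (‖u‖ ^ 2) (‖v‖ ^ 2) with ht_def
    have hu0 : u ≠ 0 := by
      rintro rfl
      exact hx0 (by rw [← hu, map_zero])
    have ht : 0 < t := lt_of_lt_of_le (pow_pos (norm_pos_iff.mpr hu0) 2) (le_max_left _ _)
    have key : ∀ (T : H →L[ℂ] H) (w : H), T.IsPositive → CFC.sqrt T w = x → ‖w‖ ^ 2 ≤ t →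
        Loewner (t⁻¹ • rankOne x) T := by
      intro T w hT hw hwt
      show (T - t⁻¹ • rankOne x).IsPositive
      have heq : T - t⁻¹ • rankOne x
          = t⁻¹ • ((t - ‖w‖ ^ 2) • T + (‖w‖ ^ 2 • T - rankOne x)) := by
        have h5 : (t - ‖w‖ ^ 2) • T + (‖w‖ ^ 2 • T - rankOne x) = t • T - rankOne x := by
          rw [sub_smul]; abel
        rw [h5, smul_sub, smul_smul, inv_mul_cancel₀ ht.ne', one_smul]
      rw [heq]
      exact isPositive_smul_r (inv_nonneg.mpr ht.le)
        ((isPositive_smul_r (sub_nonneg.mpr hwt) hT).add (rankOne_le_of_eq_sqrt hT hw))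
    have h0 := h (t⁻¹ • rankOne x)
      (isPositive_smul_r (inv_nonneg.mpr ht.le) (rankOne_isPositive x))
      (key C u hC hu (le_max_left _ _)) (key A v hA hv (le_max_right _ _))
    have hRx : rankOne x = 0 := by
      have := congrArg (fun T : H →L[ℂ] H => t • T) h0
      simpa [smul_smul, mul_inv_cancel₀ ht.ne'] using this
    have : (⟪x, x⟫ : ℂ) • x = 0 := by rw [← rankOne_apply, hRx]; rfl
    rcases smul_eq_zero.mp this with h | h
    · exact hx0 (inner_self_eq_zero.mp h)
    · exact hx0 h
  · intro h D hD hDC hDA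
    have r1 := range_sqrt_mono hD hC hDC
    have r2 := range_sqrt_mono hD hA hDA
    have hz : ∀ z, CFC.sqrt D z = 0 := fun z =>
      h _ (r1 ⟨z, rfl⟩) (r2 ⟨z, rfl⟩)
    have hsq : CFC.sqrt D = 0 := ContinuousLinearMap.ext hz
    have hD0 := CFC.sqrt_mul_sqrt_self D ((nonneg_iff_isPositive D).mpr hD)
    rw [hsq, zero_mul] at hD0
    exact hD0.symm

lemma range_subset_of_singular_sets {A B : H →L[ℂ] H} (hA : A.IsPositive) (hB : B.IsPositive)
    (hset : {C : H →L[ℂ] H | C.IsPositive ∧ Singular C A}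
      = {C : H →L[ℂ] H | C.IsPositive ∧ Singular C B}) :
    Set.range ⇑(CFC.sqrt A) ⊆ Set.range ⇑(CFC.sqrt B) := by
  intro x hxA
  by_contra hxB
  have hx0 : x ≠ 0 := fun h => hxB (h ▸ ⟨0, map_zero _⟩)
  have hnx : (‖x‖ : ℝ) ≠ 0 := norm_ne_zero_iff.mpr hx0
  have hkey : ∀ z, z ∈ Set.range ⇑(CFC.sqrt (rankOne x)) →
      z ∈ Set.range ⇑(CFC.sqrt B) → z = 0 := by
    rintro z ⟨w, hw⟩ hzB
    rw [sqrt_rankOne hx0] at hw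
    have hz : z = ((‖x‖⁻¹ : ℂ) * ⟪x, w⟫) • x := by
      rw [← hw]
      simp only [ContinuousLinearMap.smul_apply, rankOne_apply]
      rw [RCLike.real_smul_eq_coe_smul (K := ℂ), smul_smul]
      congr 1
      push_cast
      rfl
    by_cases hc : ((‖x‖⁻¹ : ℂ) * ⟪x, w⟫) = 0
    · rw [hz, hc, zero_smul]
    · exfalso
      apply hxB
      obtain ⟨v, hv⟩ := hzB
      refine ⟨((‖x‖⁻¹ : ℂ) * ⟪x, w⟫)⁻¹ • v, ?_⟩
      rw [map_smul, hv, hz, smul_smul, inv_mul_cancel₀ hc, one_smul]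
    -- done
  have hRB : Singular (rankOne x) B :=
    (singular_iff_range (rankOne_isPositive x) hB).mpr hkey
  have hmem : rankOne x ∈ {C : H →L[ℂ] H | C.IsPositive ∧ Singular C B} :=
    ⟨rankOne_isPositive x, hRB⟩
  rw [← hset] at hmem
  have hxR : x ∈ Set.range ⇑(CFC.sqrt (rankOne x)) := by
    refine ⟨((‖x‖ : ℂ))⁻¹ • x, ?_⟩
    rw [sqrt_rankOne hx0]
    simp only [ContinuousLinearMap.smul_apply, rankOne_apply, inner_smul_right,
      inner_self_eq_norm_sq_to_K]
    rw [RCLike.real_smul_eq_coe_smul (K := ℂ), smul_smul]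
    convert one_smul ℂ x using 2
    push_cast
    rw [pow_two]
    field_simp
    exact div_self (by simpa using hnx)
  exact hx0 ((singular_iff_range (rankOne_isPositive x) hA).mp hmem.2 x hxR hxA)

end Aux

/-- For positive operators `A, B`, the sets of positive operators singular
to `A` and to `B` coincide iff `ran A^{1/2} = ran B^{1/2}`. -/
theorem stmt8 (A B : H →L[ℂ] H) (hA : A.IsPositive) (hB : B.IsPositive) :
    {C : H →L[ℂ] H | C.IsPositive ∧ Singular C A} =
      {C : H →L[ℂ] H | C.IsPositive ∧ Singular C B} ↔
    Set.range ⇑(CFC.sqrt A) = Set.range ⇑(CFC.sqrt B) := by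
  constructor
  · intro hset
    exact Set.Subset.antisymm (range_subset_of_singular_sets hA hB hset)
      (range_subset_of_singular_sets hB hA hset.symm)
  · intro hr
    ext C
    simp only [Set.mem_setOf_eq]
    constructor
    · rintro ⟨h1, h2⟩
      refine ⟨h1, (singular_iff_range h1 hB).mpr ?_⟩
      have := (singular_iff_range h1 hA).mp h2
      rw [hr] at this
      exact this
    · rintro ⟨h1, h2⟩
      refine ⟨h1, (singular_iff_range h1 hA).mpr ?_⟩
      have := (singular_iff_range h1 hB).mp h2
      rw [← hr] at this
      exact this
end

section
/- Let H be a complex Hilbert space and let M and N be operator ranges in H. Then M ⊆ N if and only if every operator range K in H satisfying K ∩ N = {0} also satisfies K ∩ M = {0}. -/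
open ContinuousLinearMap Filter Topology

variable {H : Type} [NormedAddCommGroup H] [InnerProductSpace ℂ H] [CompleteSpace H]

/-- For operator ranges `M, N`: `M ⊆ N` iff every operator range `K`
with `K ∩ N = {0}` also satisfies `K ∩ M = {0}`. -/
theorem stmt10 (M N : Submodule ℂ H) (hM : IsOpRange M) (hN : IsOpRange N) :
    M ≤ N ↔ ∀ K : Submodule ℂ H, IsOpRange K → K ⊓ N = ⊥ → K ⊓ M = ⊥ := by
  constructor
  · intro hMN K _ hKN
    exact le_bot_iff.mp (le_trans (inf_le_inf_left K hMN) hKN.le)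
  · intro h
    by_contra hMN
    obtain ⟨x, hxM, hxN⟩ := Set.not_subset.mp hMN
    have hx : x ≠ 0 := fun h0 => hxN (h0 ▸ N.zero_mem)
    have hK : IsOpRange (Submodule.span ℂ {x}) := by
      refine ⟨(innerSL ℂ x).smulRight x, ?_⟩
      apply le_antisymm
      · rintro y ⟨z, rfl⟩
        exact Submodule.smul_mem _ _ (Submodule.mem_span_singleton_self x)
      · rw [Submodule.span_singleton_le_iff_mem]
        refine ⟨(inner ℂ x x : ℂ)⁻¹ • x, ?_⟩
        rw [coe_coe, smulRight_apply, innerSL_apply_apply, inner_smul_right,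
          inv_mul_cancel₀ (inner_self_ne_zero.mpr hx : (inner ℂ x x : ℂ) ≠ 0), one_smul]
    have hKN : Submodule.span ℂ {x} ⊓ N = ⊥ := by
      rw [eq_bot_iff]
      rintro y ⟨hy1, hy2⟩
      obtain ⟨c, rfl⟩ := Submodule.mem_span_singleton.mp hy1
      rcases eq_or_ne c 0 with rfl | hc
      · simp
      · exact absurd (by simpa [smul_smul, inv_mul_cancel₀ hc] using N.smul_mem c⁻¹ hy2) hxN
    have := h _ hK hKN
    rw [eq_bot_iff] at this
    exact hx (by simpa using this ⟨Submodule.mem_span_singleton_self x, hxM⟩)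
end

section
/- Let H be an infinite-dimensional complex Hilbert space and let T : H → H be a bijective linear map that maps the set of all closed subspaces of codimension 1 in H onto itself (i.e., for every closed subspace M of codimension 1, T(M) is a closed subspace of codimension 1, and every closed subspace of codimension 1 arises as such an image). Then T is bounded. -/
open ContinuousLinearMap Filter Topology

variable {H : Type} [NormedAddCommGroup H] [InnerProductSpace ℂ H] [CompleteSpace H]

/-- A bijective linear map of an infinite-dimensional complex Hilbert
space mapping the set of closed hyperplanes (closed subspaces of codimension 1) onto
itself is bounded (continuous). -/
theorem stmt14 (hinf : ¬ FiniteDimensional ℂ H)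
    (T : H →ₗ[ℂ] H) (hbij : Function.Bijective T)
    (hmap : ∀ M : Submodule ℂ H, IsClosed (M : Set H) → Module.finrank ℂ (H ⧸ M) = 1 →
      IsClosed ((M.map T : Submodule ℂ H) : Set H) ∧
        Module.finrank ℂ (H ⧸ (M.map T)) = 1)
    (honto : ∀ N : Submodule ℂ H, IsClosed (N : Set H) → Module.finrank ℂ (H ⧸ N) = 1 →
      ∃ M : Submodule ℂ H, IsClosed (M : Set H) ∧ Module.finrank ℂ (H ⧸ M) = 1 ∧
        M.map T = N) :
    Continuous T := by
  -- step 1: every g ∘ T is continuous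
  have key : ∀ g : H →L[ℂ] ℂ, Continuous fun x => g (T x) := by
    intro g
    by_cases hg : g = 0
    · simp [hg]; exact continuous_const
    · have hker : IsClosed ((LinearMap.ker (g : H →ₗ[ℂ] ℂ) : Submodule ℂ H) : Set H) :=
        ContinuousLinearMap.isClosed_ker g
      have hcod : Module.finrank ℂ (H ⧸ LinearMap.ker (g : H →ₗ[ℂ] ℂ)) = 1 := by
        have hr : LinearMap.range (g : H →ₗ[ℂ] ℂ) = ⊤ :=
          Module.Dual.range_eq_top_of_ne_zero (by
            simpa [ContinuousLinearMap.ext_iff, LinearMap.ext_iff] using hg)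
        rw [(g : H →ₗ[ℂ] ℂ).quotKerEquivRange.finrank_eq, hr, finrank_top, Module.finrank_self]
      obtain ⟨M, hMcl, _, hMmap⟩ := honto (LinearMap.ker (g : H →ₗ[ℂ] ℂ)) hker hcod
      have hcomap : LinearMap.ker ((g : H →ₗ[ℂ] ℂ).comp T) = M := by
        rw [LinearMap.ker_comp, ← hMmap, Submodule.comap_map_eq_of_injective hbij.1]
      have : Continuous ((g : H →ₗ[ℂ] ℂ).comp T) := by
        rw [LinearMap.continuous_iff_isClosed_ker, hcomap]; exact hMcl
      exact this
  -- step 2: graph closed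
  have hgraph : IsClosed (T.graph : Set (H × H)) := by
    have : (T.graph : Set (H × H)) =
        ⋂ g : H →L[ℂ] ℂ, {p : H × H | g (T p.1) = g p.2} := by
      ext ⟨x, y⟩
      simp only [Set.mem_iInter, Set.mem_setOf_eq, SetLike.mem_coe, LinearMap.mem_graph_iff]
      constructor
      · rintro rfl g; rfl
      · intro h
        have h0 : ∀ g : H →L[ℂ] ℂ, g (y - T x) = 0 := by
          intro g; simp [map_sub, h g]
        have := h0 (innerSL ℂ (y - T x))
        simp only [innerSL_apply_apply] at this
        exact sub_eq_zero.mp (inner_self_eq_zero.mp this)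
    rw [this]
    exact isClosed_iInter fun g =>
      isClosed_eq ((key g).comp continuous_fst) (g.continuous.comp continuous_snd)
  exact T.continuous_of_isClosed_graph hgraph
end

section
/- Let H be a complex Hilbert space, let T : H → H be a bounded, invertible, linear operator, and let A ∈ B₊(H). Then ran(T A^{1/2}) = ran((T A T*)^{1/2}); in particular T(ran A^{1/2}) = ran((T A T*)^{1/2}). -/
set_option synthInstance.maxHeartbeats 1000000
set_option maxHeartbeats 1000000

open ContinuousLinearMap Filter Topology

variable {H : Type} [NormedAddCommGroup H] [InnerProductSpace ℂ H] [CompleteSpace H]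

local notation "⟪" x ", " y "⟫" => @inner ℂ _ _ x y

/-- Douglas-type range characterization: `y ∈ ran S` iff the functional `x ↦ ⟪y, x⟫` is
dominated by `x ↦ c * ‖S* x‖`. -/
lemma mem_range_iff_bound (S : H →L[ℂ] H) (y : H) :
    (∃ z, S z = y) ↔ ∃ c : ℝ, ∀ x, ‖⟪y, x⟫‖ ≤ c * ‖adjoint S x‖ := by
  constructor
  · rintro ⟨z, rfl⟩
    refine ⟨‖z‖, fun x => ?_⟩
    rw [← adjoint_inner_right]
    exact norm_inner_le_norm _ _
  · rintro ⟨c, hc⟩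
    set L : H →ₗ[ℂ] H := (adjoint S : H →L[ℂ] H).toLinearMap with hL
    set φ : H →ₗ[ℂ] ℂ := (innerSL ℂ y).toLinearMap with hφ
    have hker : LinearMap.ker L ≤ LinearMap.ker φ := by
      intro x hx
      have hx' : adjoint S x = 0 := hx
      have := hc x
      rw [hx', norm_zero, mul_zero] at this
      simpa [hφ, LinearMap.mem_ker] using le_antisymm this (norm_nonneg _)
    set fLin : LinearMap.range L →ₗ[ℂ] ℂ :=
      ((LinearMap.ker L).liftQ φ hker).comp L.quotKerEquivRange.symm.toLinearMap with hfLin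
    have key : ∀ x : H, fLin ⟨L x, LinearMap.mem_range_self L x⟩ = ⟪y, x⟫ := by
      intro x
      simp [hfLin, hφ, LinearMap.quotKerEquivRange_symm_apply_image, Submodule.mkQ_apply]
    have hbound : ∀ u : LinearMap.range L, ‖fLin u‖ ≤ (max c 0) * ‖u‖ := by
      rintro ⟨u, hu⟩
      obtain ⟨x, rfl⟩ := hu
      rw [key x]
      calc ‖⟪y, x⟫‖ ≤ c * ‖adjoint S x‖ := hc x
        _ ≤ (max c 0) * ‖adjoint S x‖ :=
          mul_le_mul_of_nonneg_right (le_max_left _ _) (norm_nonneg _)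
        _ = (max c 0) * ‖(⟨L x, LinearMap.mem_range_self L x⟩ : LinearMap.range L)‖ := rfl
    set f : LinearMap.range L →L[ℂ] ℂ := fLin.mkContinuous (max c 0) hbound with hf
    obtain ⟨g, hg, -⟩ := exists_extension_norm_eq (LinearMap.range L) f
    set z : H := (InnerProductSpace.toDual ℂ H).symm g with hz
    refine ⟨z, ?_⟩
    refine ext_inner_right ℂ fun v => ?_
    calc ⟪S z, v⟫ = ⟪z, adjoint S v⟫ := (adjoint_inner_right S z v).symm
      _ = g (adjoint S v) := InnerProductSpace.toDual_symm_apply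
      _ = f ⟨L v, LinearMap.mem_range_self L v⟩ := hg ⟨L v, LinearMap.mem_range_self L v⟩
      _ = ⟪y, v⟫ := key v

lemma range_eq_of_adjoint_norm_eq (S C : H →L[ℂ] H)
    (h : ∀ x, ‖adjoint S x‖ = ‖adjoint C x‖) : Set.range ⇑S = Set.range ⇑C := by
  ext y
  simp only [Set.mem_range]
  rw [mem_range_iff_bound, mem_range_iff_bound]
  refine exists_congr fun c => forall_congr' fun x => ?_
  rw [h x]

/-- For a bounded invertible linear `T` and positive `A`:
`ran (T A^{1/2}) = ran ((T A T*)^{1/2})`; in particular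
`T (ran A^{1/2}) = ran ((T A T*)^{1/2})`. -/
theorem stmt15 (T : H ≃L[ℂ] H) (A : H →L[ℂ] H) (hA : A.IsPositive) :
    Set.range ⇑((T : H →L[ℂ] H) * CFC.sqrt A) =
      Set.range ⇑(CFC.sqrt ((T : H →L[ℂ] H) * A * adjoint (T : H →L[ℂ] H))) ∧
    ⇑T '' Set.range ⇑(CFC.sqrt A) =
      Set.range ⇑(CFC.sqrt ((T : H →L[ℂ] H) * A * adjoint (T : H →L[ℂ] H))) := by
  set T' : H →L[ℂ] H := (T : H →L[ℂ] H)
  set D : H →L[ℂ] H := T' * CFC.sqrt A with hD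
  set Q : H →L[ℂ] H := CFC.sqrt (T' * A * adjoint T') with hQ
  have hA' : (0 : H →L[ℂ] H) ≤ A := (nonneg_iff_isPositive A).2 hA
  have hsqrtA : (CFC.sqrt A).IsPositive := (nonneg_iff_isPositive _).1 (CFC.sqrt_nonneg _)
  have hTAT : (T' * A * adjoint T').IsPositive := by
    have := hA.conj_adjoint T'
    rw [mul_assoc]; exact this
  have hQpos : Q.IsPositive := (nonneg_iff_isPositive _).1 (CFC.sqrt_nonneg _)
  have hQsq : Q * Q = T' * A * adjoint T' :=
    CFC.sqrt_mul_sqrt_self _ ((nonneg_iff_isPositive _).2 hTAT)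
  have hDD : D * adjoint D = Q * Q := by
    rw [hQsq, hD, ← star_eq_adjoint, star_mul, star_eq_adjoint, star_eq_adjoint,
      hsqrtA.isSelfAdjoint.adjoint_eq, mul_assoc, ← mul_assoc (CFC.sqrt A),
      CFC.sqrt_mul_sqrt_self A hA', ← mul_assoc]
  have hnorm : ∀ x, ‖adjoint D x‖ = ‖adjoint Q x‖ := by
    intro x
    rw [hQpos.isSelfAdjoint.adjoint_eq]
    have h1 : (⟪adjoint D x, adjoint D x⟫ : ℂ) = ⟪x, (D * adjoint D) x⟫ := by
      rw [ContinuousLinearMap.mul_apply, adjoint_inner_left]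
    have h2 : (⟪Q x, Q x⟫ : ℂ) = ⟪x, (Q * Q) x⟫ := by
      rw [ContinuousLinearMap.mul_apply]
      nth_rewrite 1 [← hQpos.isSelfAdjoint.adjoint_eq]
      exact adjoint_inner_left Q (Q x) x
    have h3 : (⟪adjoint D x, adjoint D x⟫ : ℂ) = ⟪Q x, Q x⟫ := by rw [h1, h2, hDD]
    rw [inner_self_eq_norm_sq_to_K, inner_self_eq_norm_sq_to_K] at h3
    have h4 : ‖adjoint D x‖ ^ 2 = ‖Q x‖ ^ 2 := by exact_mod_cast h3
    exact (sq_eq_sq₀ (norm_nonneg _) (norm_nonneg _)).1 h4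
  have hrange : Set.range ⇑D = Set.range ⇑Q := range_eq_of_adjoint_norm_eq D Q hnorm
  refine ⟨hrange, ?_⟩
  rw [← hrange]
  have hcoe : ⇑D = ⇑T ∘ ⇑(CFC.sqrt A) := by
    ext v
    simp [hD, mul_apply, T']
  rw [hcoe, Set.range_comp]
end

section
/- Let H be a complex Hilbert space, let T : H → H be a bounded, invertible, linear operator, let A, B ∈ B₊(H), let Y_A, Y_B be bounded invertible operators on H, and let A', B' ∈ B₊(H) satisfy (A')^{1/2} = T A^{1/2} T* Y_A and (B')^{1/2} = T B^{1/2} T* Y_B. For positive operators C, D define 𝒟_{C,D} := {x ∈ H : C^{1/2} x ∈ ran D^{1/2}}. Then 𝒟_{A',B'} = (T* Y_A)^{-1}(𝒟_{A,B}); in particular, 𝒟_{A,B} is dense in H if and only if 𝒟_{A',B'} is dense in H. -/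
set_option synthInstance.maxHeartbeats 1000000
set_option maxHeartbeats 1000000

open ContinuousLinearMap Filter Topology

variable {H : Type} [NormedAddCommGroup H] [InnerProductSpace ℂ H] [CompleteSpace H]

/-- The set `𝒟_{C,D} = {x : C^{1/2} x ∈ ran D^{1/2}}`. -/
def domSet (C D : H →L[ℂ] H) : Set H :=
  {x : H | CFC.sqrt C x ∈ Set.range ⇑(CFC.sqrt D)}

/-- If `(A')^{1/2} = T A^{1/2} T* Y_A` and `(B')^{1/2} = T B^{1/2} T* Y_B`
with `T` bounded invertible linear and `Y_A, Y_B` bounded invertible, then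
`𝒟_{A',B'} = (T* Y_A)⁻¹(𝒟_{A,B})`; in particular `𝒟_{A,B}` is dense iff `𝒟_{A',B'}`
is dense. -/
theorem stmt16 (T : H ≃L[ℂ] H)
    (A B A' B' : H →L[ℂ] H)
    (hA : A.IsPositive) (hB : B.IsPositive) (hA' : A'.IsPositive) (hB' : B'.IsPositive)
    (YA YB : H →L[ℂ] H) (hYA : IsUnit YA) (hYB : IsUnit YB)
    (h1 : CFC.sqrt A' = (T : H →L[ℂ] H) * CFC.sqrt A * adjoint (T : H →L[ℂ] H) * YA)
    (h2 : CFC.sqrt B' = (T : H →L[ℂ] H) * CFC.sqrt B * adjoint (T : H →L[ℂ] H) * YB) :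
    domSet A' B' = ⇑(adjoint (T : H →L[ℂ] H) * YA) ⁻¹' domSet A B ∧
      (Dense (domSet A B) ↔ Dense (domSet A' B')) := by
  -- adjoint of T is a unit
  have hTadj : IsUnit (adjoint (T : H →L[ℂ] H)) := by
    refine ⟨⟨adjoint (T : H →L[ℂ] H), adjoint (T.symm : H →L[ℂ] H), ?_, ?_⟩, rfl⟩
    · show adjoint (T : H →L[ℂ] H) ∘L adjoint (T.symm : H →L[ℂ] H) = 1
      rw [← adjoint_comp]
      have : (T.symm : H →L[ℂ] H) ∘L (T : H →L[ℂ] H) = 1 := by ext x; simp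
      rw [this]; rw [ContinuousLinearMap.one_def, adjoint_id]
    · show adjoint (T.symm : H →L[ℂ] H) ∘L adjoint (T : H →L[ℂ] H) = 1
      rw [← adjoint_comp]
      have : (T : H →L[ℂ] H) ∘L (T.symm : H →L[ℂ] H) = 1 := by ext x; simp
      rw [this]; rw [ContinuousLinearMap.one_def, adjoint_id]
  have hS : IsUnit (adjoint (T : H →L[ℂ] H) * YA) := hTadj.mul hYA
  have hSB : IsUnit (adjoint (T : H →L[ℂ] H) * YB) := hTadj.mul hYB
  have hSBsurj : Function.Surjective ⇑(adjoint (T : H →L[ℂ] H) * YB) :=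
    (ContinuousLinearMap.isUnit_iff_bijective.mp hSB).2
  -- range of sqrt B'
  have hrange : Set.range ⇑(CFC.sqrt B') = ⇑(T : H →L[ℂ] H) '' Set.range ⇑(CFC.sqrt B) := by
    have : CFC.sqrt B' =
        ((T : H →L[ℂ] H) ∘L CFC.sqrt B) ∘L (adjoint (T : H →L[ℂ] H) * YB) := by
      rw [h2]; rfl
    rw [this]
    rw [ContinuousLinearMap.coe_comp', Set.range_comp,
      hSBsurj.range_eq, Set.image_univ,
      ContinuousLinearMap.coe_comp', Set.range_comp]
  have hmain : domSet A' B' = ⇑(adjoint (T : H →L[ℂ] H) * YA) ⁻¹' domSet A B := by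
    ext x
    simp only [domSet, Set.mem_setOf_eq, Set.mem_preimage]
    rw [h1, hrange]
    have hx : ((T : H →L[ℂ] H) * CFC.sqrt A * adjoint (T : H →L[ℂ] H) * YA) x =
        T (CFC.sqrt A ((adjoint (T : H →L[ℂ] H) * YA) x)) := rfl
    rw [hx]
    exact (T.injective).mem_set_image
  refine ⟨hmain, ?_⟩
  -- density
  obtain ⟨u, hu⟩ := hS
  let e : H ≃L[ℂ] H := ContinuousLinearEquiv.ofUnit u
  have he : ⇑(adjoint (T : H →L[ℂ] H) * YA) = ⇑e := by rw [← hu]; rfl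
  constructor
  · intro hd
    rw [hmain, he]
    exact hd.preimage e.toHomeomorph.isOpenMap
  · intro hd
    rw [hmain, he] at hd
    have := hd.preimage e.symm.toHomeomorph.isOpenMap
    have heq : ⇑e.symm.toHomeomorph ⁻¹' (⇑e ⁻¹' domSet A B) = domSet A B := by
      ext y; simp
    rwa [heq] at this
end

section
/- Let H be a complex Hilbert space and let B ∈ B₊(H). Then every A ∈ B₊(H) is B-absolutely continuous (A ≪ B for all A ∈ B₊(H)) if and only if B is invertible (i.e., B has a bounded inverse). -/
open ContinuousLinearMap Filter Topology

variable {H : Type} [NormedAddCommGroup H] [InnerProductSpace ℂ H] [CompleteSpace H]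

section Aux

local notation "⟪" x ", " y "⟫" => @inner ℂ _ _ x y

/-- Cauchy–Schwarz inequality for the semi-inner product induced by a positive operator. -/
lemma cs_pos {T : H →L[ℂ] H} (hT : T.IsPositive) (x y : H) :
    ‖⟪T x, y⟫‖ * ‖⟪T y, x⟫‖ ≤ RCLike.re ⟪T x, x⟫ * RCLike.re ⟪T y, y⟫ := by
  have hsymm := (hT.1)
  letI c : PreInnerProductSpace.Core ℂ H :=
    { inner := fun u v => ⟪T u, v⟫
      conj_inner_symm := fun u v => hsymm.conj_inner_sym v u
      re_inner_nonneg := fun u => hT.2 u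
      add_left := fun u v w => by simp [inner_add_left]
      smul_left := fun u v r => by simp [inner_smul_left, mul_comm] }
  exact InnerProductSpace.Core.inner_mul_inner_self_le (𝕜 := ℂ) (F := H) x y

/-- A positive operator whose quadratic form vanishes at a point kills that point. -/
lemma pos_inner_zero {T : H →L[ℂ] H} (hT : T.IsPositive) {w : H}
    (hw : RCLike.re ⟪T w, w⟫ ≤ 0) : T w = 0 := by
  have hsymm := (hT.1)
  have h := cs_pos hT w (T w)
  have h0 : RCLike.re ⟪T w, w⟫ = 0 := le_antisymm hw (hT.re_inner_nonneg_left w)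
  rw [h0, zero_mul] at h
  have h1 : ⟪T w, T w⟫ = ((‖T w‖ : ℂ))^2 := inner_self_eq_norm_sq_to_K (T w)
  have h2 : ⟪T (T w), w⟫ = ⟪T w, T w⟫ := hsymm (T w) w
  rw [h1, h2, h1] at h
  have h3 : ‖((‖T w‖ : ℂ))^2‖ = ‖T w‖^2 := by
    rw [norm_pow, Complex.norm_real, norm_norm]
  rw [h3] at h
  have h4 : ‖T w‖^2 * ‖T w‖^2 = 0 := le_antisymm h (by positivity)
  have h5 : ‖T w‖^2 = 0 := mul_self_eq_zero.mp h4
  have : ‖T w‖ = 0 := by simpa using sq_eq_zero_iff.mp h5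
  simpa using this

lemma loewner_re_s18 {S T : H →L[ℂ] H} (h : Loewner S T) (y : H) :
    RCLike.re ⟪S y, y⟫ ≤ RCLike.re ⟪T y, y⟫ := by
  have h2 := h.2 y
  rw [reApplyInnerSelf_apply, ContinuousLinearMap.sub_apply, inner_sub_left, map_sub] at h2
  linarith

lemma re_inner_real_smul (c : ℝ) (T : H →L[ℂ] H) (y : H) :
    RCLike.re ⟪(c • T) y, y⟫ = c * RCLike.re ⟪T y, y⟫ := by
  rw [ContinuousLinearMap.smul_apply, RCLike.real_smul_eq_coe_smul (K := ℂ),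
    inner_smul_left, RCLike.conj_ofReal, RCLike.re_ofReal_mul]

lemma isSelfAdjoint_real_smul (c : ℝ) {T : H →L[ℂ] H} (hT : IsSelfAdjoint T) :
    IsSelfAdjoint (c • T) := by
  have hsym := isSelfAdjoint_iff_isSymmetric.mp hT
  refine isSelfAdjoint_iff_isSymmetric.mpr fun u v => ?_
  show ⟪(c • T) u, v⟫ = ⟪u, (c • T) v⟫
  rw [ContinuousLinearMap.smul_apply, ContinuousLinearMap.smul_apply,
    RCLike.real_smul_eq_coe_smul (K := ℂ), RCLike.real_smul_eq_coe_smul (K := ℂ),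
    inner_smul_left, inner_smul_right, RCLike.conj_ofReal]
  exact congrArg _ (hsym u v)

/-- An invertible positive operator is coercive. -/
lemma coercive_of_isUnit {B : H →L[ℂ] H} (hB : B.IsPositive) (hU : IsUnit B) :
    ∃ M : ℝ, 0 < M ∧ ∀ y : H, ‖y‖^2 ≤ M * RCLike.re ⟪B y, y⟫ := by
  have hsymm := (hB.1)
  obtain ⟨u, hu⟩ := hU
  set Bi : H →L[ℂ] H := ↑u⁻¹ with hBi
  refine ⟨‖Bi‖ + 1, by positivity, fun y => ?_⟩
  by_cases hy : y = 0
  · simp [hy]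
  set z : H := Bi y with hz
  have hBz : B z = y := by
    have : (↑u * ↑u⁻¹ : H →L[ℂ] H) y = y := by rw [u.mul_inv]; rfl
    rwa [hu] at this
  have h1 := cs_pos hB z y
  have e1 : ⟪B z, y⟫ = ((‖y‖ : ℂ))^2 := by rw [hBz]; exact inner_self_eq_norm_sq_to_K y
  have e2 : ⟪B y, z⟫ = ((‖y‖ : ℂ))^2 := by
    have h := hsymm y z
    change (⟪B y, z⟫ : ℂ) = ⟪y, B z⟫ at h
    rw [h, hBz]; exact inner_self_eq_norm_sq_to_K y
  rw [e1, e2] at h1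
  have e3 : ‖((‖y‖ : ℂ))^2‖ = ‖y‖^2 := by rw [norm_pow, Complex.norm_real, norm_norm]
  rw [e3] at h1
  have h2 : RCLike.re ⟪B z, z⟫ ≤ ‖Bi‖ * ‖y‖^2 := by
    calc RCLike.re ⟪B z, z⟫ ≤ ‖(⟪B z, z⟫ : ℂ)‖ := RCLike.re_le_norm _
    _ ≤ ‖B z‖ * ‖z‖ := norm_inner_le_norm _ _
    _ = ‖y‖ * ‖z‖ := by rw [hBz]
    _ ≤ ‖y‖ * (‖Bi‖ * ‖y‖) := by
        have := Bi.le_opNorm y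
        exact mul_le_mul_of_nonneg_left this (norm_nonneg y)
    _ = ‖Bi‖ * ‖y‖^2 := by ring
  have hre : 0 ≤ RCLike.re ⟪B y, y⟫ := hB.re_inner_nonneg_left y
  have hy2 : 0 < ‖y‖^2 := by
    have := norm_pos_iff.mpr hy
    positivity
  nlinarith [mul_le_mul_of_nonneg_right h2 hre]

/-- Every positive operator is absolutely continuous w.r.t. a coercive positive operator. -/
lemma absCont_of_coercive {B : H →L[ℂ] H} {M : ℝ} (hM : 0 < M)
    (hco : ∀ y : H, ‖y‖^2 ≤ M * RCLike.re ⟪B y, y⟫) (hBpos : B.IsPositive)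
    (A : H →L[ℂ] H) (hA : A.IsPositive) : AbsCont A B := by
  refine ⟨fun _ => A, fun _ => hA, fun m n _ => ?_, fun _ => ⟨M * ‖A‖, by positivity, ?_⟩,
    fun x => tendsto_const_nhds⟩
  · show (A - A).IsPositive
    simpa [sub_self] using (isPositive_zero : (0 : H →L[ℂ] H).IsPositive)
  · show ((M * ‖A‖) • B - A).IsPositive
    refine ⟨isSelfAdjoint_iff_isSymmetric.mp ((isSelfAdjoint_real_smul _ hBpos.isSelfAdjoint).sub hA.isSelfAdjoint), fun y => ?_⟩
    rw [reApplyInnerSelf_apply, ContinuousLinearMap.sub_apply, inner_sub_left, map_sub,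
      re_inner_real_smul]
    have h1 : RCLike.re ⟪A y, y⟫ ≤ ‖A‖ * ‖y‖^2 := by
      calc RCLike.re ⟪A y, y⟫ ≤ ‖(⟪A y, y⟫ : ℂ)‖ := RCLike.re_le_norm _
      _ ≤ ‖A y‖ * ‖y‖ := norm_inner_le_norm _ _
      _ ≤ (‖A‖ * ‖y‖) * ‖y‖ :=
          mul_le_mul_of_nonneg_right (A.le_opNorm y) (norm_nonneg y)
      _ = ‖A‖ * ‖y‖^2 := by ring
    have h2 := hco y
    nlinarith [mul_le_mul_of_nonneg_left h2 (norm_nonneg A)]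

/-- Key step: if every positive operator is `B`-absolutely continuous, then every rank-one
quadratic form is dominated by a multiple of the form of `B`. -/
lemma step1 {B : H →L[ℂ] H} (hB : B.IsPositive)
    (h : ∀ A : H →L[ℂ] H, A.IsPositive → AbsCont A B) (x : H) :
    ∃ c : ℝ, 0 ≤ c ∧ ∀ y : H, ‖(⟪x, y⟫ : ℂ)‖^2 ≤ c * RCLike.re ⟪B y, y⟫ := by
  by_cases hx : x = 0
  · exact ⟨0, le_refl _, fun y => by simp [hx]⟩
  have hxn : 0 < ‖x‖ := norm_pos_iff.mpr hx
  set P : H →L[ℂ] H := (innerSL ℂ x).smulRight x with hPdef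
  have hPapp : ∀ y, P y = (⟪x, y⟫ : ℂ) • x := fun y => rfl
  have hPsym : (P : H →ₗ[ℂ] H).IsSymmetric := by
    intro u v
    change ⟪P u, v⟫ = ⟪u, P v⟫
    rw [hPapp, hPapp, inner_smul_left, inner_smul_right, inner_conj_symm]
    ring
  have hPpos : P.IsPositive := by
    refine ⟨hPsym, fun y => ?_⟩
    rw [reApplyInnerSelf_apply, hPapp, inner_smul_left, RCLike.conj_mul,
      ← RCLike.ofReal_pow, RCLike.ofReal_re]
    positivity
  obtain ⟨f, hfpos, hmono, hdom, hlim⟩ := h P hPpos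
  have hfleP : ∀ n, Loewner (f n) P := by
    intro n
    refine ⟨hPpos.1.sub (hfpos n).1, fun y => ?_⟩
    rw [reApplyInnerSelf_apply, ContinuousLinearMap.sub_apply, inner_sub_left, map_sub,
      sub_nonneg]
    have htt : Tendsto (fun m => RCLike.re ⟪f m y, y⟫) atTop (𝓝 (RCLike.re ⟪P y, y⟫)) :=
      (RCLike.continuous_re.tendsto _).comp ((hlim y).inner tendsto_const_nhds)
    refine ge_of_tendsto htt ?_
    filter_upwards [eventually_ge_atTop n] with m hm
    have := loewner_re_s18 (hmono n m hm) y
    linarith [le_refl (0:ℝ)]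
  have hPxx : RCLike.re ⟪P x, x⟫ = ‖x‖^4 := by
    rw [hPapp, inner_smul_left, RCLike.conj_mul, inner_self_eq_norm_sq_to_K,
      ← RCLike.ofReal_pow, RCLike.ofReal_re]
    rw [norm_pow, RCLike.norm_ofReal, abs_norm]
    ring
  have hx4 : (0:ℝ) < ‖x‖^4 := by positivity
  have htx : Tendsto (fun n => RCLike.re ⟪f n x, x⟫) atTop (𝓝 (‖x‖^4)) := by
    rw [← hPxx]
    exact (RCLike.continuous_re.tendsto _).comp ((hlim x).inner tendsto_const_nhds)
  obtain ⟨n, hn⟩ := (htx.eventually (eventually_gt_nhds (by linarith : ‖x‖^4/2 < ‖x‖^4))).exists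
  obtain ⟨cn, hcn0, hcnB⟩ := hdom n
  have hfsym := (hfpos n).1
  refine ⟨2 * cn, by positivity, fun y => ?_⟩
  set s : ℂ := (⟪x, y⟫ : ℂ) / ((‖x‖ : ℂ)^2) with hs
  set w : H := y - s • x with hw
  have hxx : (⟪x, x⟫ : ℂ) = ((‖x‖ : ℂ))^2 := inner_self_eq_norm_sq_to_K x
  have hxcne : ((‖x‖ : ℂ))^2 ≠ 0 := by
    exact pow_ne_zero 2 (Complex.ofReal_ne_zero.mpr (ne_of_gt hxn))
  have hxw : (⟪x, w⟫ : ℂ) = 0 := by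
    rw [hw, inner_sub_right, inner_smul_right, hxx, hs]
    field_simp
    rw [div_self (Complex.ofReal_ne_zero.mpr (ne_of_gt hxn)), sub_self, mul_zero]
  have hPw : P w = 0 := by rw [hPapp, hxw, zero_smul]
  have hfw : f n w = 0 := by
    apply pos_inner_zero (hfpos n)
    have h1 := loewner_re_s18 (hfleP n) w
    rw [hPw] at h1
    simpa using h1
  have hyw : y = w + s • x := by rw [hw]; abel
  have hfy : f n y = s • f n x := by rw [hyw, map_add, map_smul, hfw, zero_add]
  have hfxw : (⟪f n x, w⟫ : ℂ) = 0 := by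
    have h0 := hfsym x w
    change (⟪f n x, w⟫ : ℂ) = ⟪x, f n w⟫ at h0
    rw [h0, hfw, inner_zero_right]
  have hfyy : RCLike.re ⟪f n y, y⟫ = ‖s‖^2 * RCLike.re ⟪f n x, x⟫ := by
    rw [hfy, hyw, inner_smul_left, inner_add_right, inner_smul_right, hfxw, zero_add,
      ← mul_assoc, RCLike.conj_mul, ← RCLike.ofReal_pow, RCLike.re_ofReal_mul]
  have hsnorm : ‖s‖^2 = ‖(⟪x, y⟫ : ℂ)‖^2 / ‖x‖^4 := by
    rw [hs, norm_div, norm_pow, Complex.norm_real, norm_norm, div_pow]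
    ring
  have e : ‖s‖^2 * ‖x‖^4 = ‖(⟪x, y⟫ : ℂ)‖^2 := by
    rw [hsnorm]
    field_simp
  have hfy_le : RCLike.re ⟪f n y, y⟫ ≤ cn * RCLike.re ⟪B y, y⟫ := by
    have h1 := loewner_re_s18 hcnB y
    rwa [re_inner_real_smul] at h1
  have h6 : ‖s‖^2 * (‖x‖^4/2) ≤ cn * RCLike.re ⟪B y, y⟫ := by
    calc ‖s‖^2 * (‖x‖^4/2) ≤ ‖s‖^2 * RCLike.re ⟪f n x, x⟫ :=
          mul_le_mul_of_nonneg_left (by linarith) (sq_nonneg _)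
    _ = RCLike.re ⟪f n y, y⟫ := hfyy.symm
    _ ≤ cn * RCLike.re ⟪B y, y⟫ := hfy_le
  nlinarith [h6, e]

end Aux

/-- Every positive operator is `B`-absolutely continuous iff `B` is
invertible. -/
theorem stmt18 (B : H →L[ℂ] H) (hB : B.IsPositive) :
    (∀ A : H →L[ℂ] H, A.IsPositive → AbsCont A B) ↔ IsUnit B := by
  constructor
  · intro h
    have hren : ∀ y : H, 0 ≤ RCLike.re (inner ℂ (B y) y : ℂ) := fun y => hB.re_inner_nonneg_left y
    set E : ℕ → Set H :=
      fun n => {x | ∀ y, ‖(inner ℂ x y : ℂ)‖^2 ≤ n * RCLike.re (inner ℂ (B y) y : ℂ)} with hE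
    have hclosed : ∀ n, IsClosed (E n) := by
      intro n
      have hEn : E n = ⋂ y : H,
          {x | ‖(inner ℂ x y : ℂ)‖^2 ≤ n * RCLike.re (inner ℂ (B y) y : ℂ)} := by
        ext x; simp [hE, Set.mem_iInter]
      rw [hEn]
      refine isClosed_iInter fun y => isClosed_le ?_ continuous_const
      exact (Continuous.inner continuous_id continuous_const).norm.pow 2
    have hcover : (⋃ n, E n) = Set.univ := by
      rw [Set.eq_univ_iff_forall]
      intro x
      obtain ⟨c, hc0, hc⟩ := step1 hB h x
      refine Set.mem_iUnion.mpr ⟨⌈c⌉₊, fun y => ?_⟩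
      exact le_trans (hc y) (mul_le_mul_of_nonneg_right (Nat.le_ceil c) (hren y))
    haveI : Nonempty H := ⟨0⟩
    obtain ⟨n, x₀, hx₀⟩ := nonempty_interior_of_iUnion_of_closed hclosed hcover
    obtain ⟨ε, hε, hball⟩ := Metric.mem_nhds_iff.mp (mem_interior_iff_mem_nhds.mp hx₀)
    have key2 : ∀ z : H, ‖z‖ < ε → ∀ y,
        ‖(inner ℂ z y : ℂ)‖^2 ≤ 4 * n * RCLike.re (inner ℂ (B y) y : ℂ) := by
      intro z hz y
      have h1 : x₀ + z ∈ E n := hball (by simp [Metric.mem_ball, dist_eq_norm, hz])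
      have h0 : x₀ ∈ E n := hball (Metric.mem_ball_self hε)
      have e : (inner ℂ z y : ℂ) = inner ℂ (x₀ + z) y - inner ℂ x₀ y := by
        rw [inner_add_left]; ring
      have hnorm : ‖(inner ℂ z y : ℂ)‖ ≤ ‖(inner ℂ (x₀ + z) y : ℂ)‖ + ‖(inner ℂ x₀ y : ℂ)‖ := by
        rw [e]; exact norm_sub_le _ _
      have ha := h1 y
      have hb := h0 y
      nlinarith [norm_nonneg (inner ℂ (x₀ + z) y : ℂ), norm_nonneg (inner ℂ x₀ y : ℂ),
        norm_nonneg (inner ℂ z y : ℂ),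
        sq_nonneg (‖(inner ℂ (x₀ + z) y : ℂ)‖ - ‖(inner ℂ x₀ y : ℂ)‖)]
    have coer : ∀ y : H, (ε/2)^2 * ‖y‖^2 ≤ 4 * n * RCLike.re (inner ℂ (B y) y : ℂ) := by
      intro y
      by_cases hy : y = 0
      · simp [hy]
      · have hyn : 0 < ‖y‖ := norm_pos_iff.mpr hy
        set t : ℝ := ε / (2 * ‖y‖) with ht
        have htpos : 0 < t := by positivity
        set z : H := ((t : ℂ)) • y with hzdef
        have htny : t * ‖y‖ = ε / 2 := by
          rw [ht]; field_simp
        have hzn : ‖z‖ < ε := by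
          rw [hzdef, norm_smul, Complex.norm_real, Real.norm_eq_abs, abs_of_pos htpos, htny]
          linarith
        have hinner : ‖(inner ℂ z y : ℂ)‖ = t * ‖y‖^2 := by
          rw [hzdef, inner_smul_left, Complex.conj_ofReal, norm_mul, Complex.norm_real,
            Real.norm_eq_abs, abs_of_pos htpos, inner_self_eq_norm_sq_to_K]
          rw [norm_pow, RCLike.norm_ofReal, abs_norm]
        have hk := key2 z hzn y
        rw [hinner] at hk
        have heq : (t * ‖y‖^2)^2 = (ε/2)^2 * ‖y‖^2 := by
          rw [← htny]; ring
        linarith [hk, heq.ge, heq.le]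
    set m : ℝ := (ε/2)^2 / (4*n + 4) with hm
    have hmpos : 0 < m := by positivity
    have hfin : ∀ y : H, ‖y‖^2 * m ≤ ‖(inner ℂ (B y) y : ℂ)‖ := by
      intro y
      have h1 := coer y
      have h3 : RCLike.re (inner ℂ (B y) y : ℂ) ≤ ‖(inner ℂ (B y) y : ℂ)‖ := RCLike.re_le_norm _
      have h4 : (0:ℝ) < 4*(n:ℝ)+4 := by positivity
      have h5 : (ε/2)^2 * ‖y‖^2 ≤ (4*(n:ℝ)+4) * ‖(inner ℂ (B y) y : ℂ)‖ := by
        nlinarith [hren y]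
      calc ‖y‖^2 * m = ((ε/2)^2 * ‖y‖^2)/(4*(n:ℝ)+4) := by rw [hm]; ring
      _ ≤ ((4*(n:ℝ)+4) * ‖(inner ℂ (B y) y : ℂ)‖)/(4*(n:ℝ)+4) := by gcongr
      _ = ‖(inner ℂ (B y) y : ℂ)‖ := by field_simp
    exact isUnit_of_forall_le_norm_inner_map B (c := ⟨m, hmpos.le⟩)
      (by exact_mod_cast hmpos) hfin
  · intro hU A hA
    obtain ⟨M, hM, hco⟩ := coercive_of_isUnit hB hU
    exact absCont_of_coercive hM hco hB A hA
end

section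
/- Let H be a complex Hilbert space and let φ : B₊(H) → B₊(H) be a bijective map such that φ(A) = A for every non-invertible A ∈ B₊(H) and φ maps the set of invertible elements of B₊(H) onto itself. Then φ preserves absolute continuity in both directions, i.e., for all A, B ∈ B₊(H): A ≪ B if and only if φ(A) ≪ φ(B). -/
open ContinuousLinearMap Filter Topology

variable {H : Type} [NormedAddCommGroup H] [InnerProductSpace ℂ H] [CompleteSpace H]

set_option maxHeartbeats 1000000
set_option synthInstance.maxHeartbeats 400000

lemma loewner_iff_le (A B : H →L[ℂ] H) : Loewner A B ↔ A ≤ B := Iff.rfl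

lemma smul_nn {r : ℝ} (hr : 0 ≤ r) {X : H →L[ℂ] H} (hX : 0 ≤ X) : 0 ≤ r • X := by
  set s := CFC.sqrt X with hs
  have hsnn : 0 ≤ s := CFC.sqrt_nonneg X
  have hss : s * s = X := CFC.sqrt_mul_sqrt_self X hX
  have key : star (Real.sqrt r • s) * (Real.sqrt r • s) = r • X := by
    rw [star_smul, star_trivial, (IsSelfAdjoint.of_nonneg hsnn).star_eq,
      smul_mul_smul_comm, Real.mul_self_sqrt hr, hss]
  calc (0 : H →L[ℂ] H) ≤ _ := star_mul_self_nonneg (Real.sqrt r • s)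
    _ = r • X := key

lemma apply_eq_zero_of_re_inner_le {f : H →L[ℂ] H} (hf : 0 ≤ f) (x : H)
    (h : RCLike.re (inner ℂ (f x) x : ℂ) ≤ 0) : f x = 0 := by
  set s := CFC.sqrt f with hs
  have hsnn : 0 ≤ s := CFC.sqrt_nonneg f
  have hss : s * s = f := CFC.sqrt_mul_sqrt_self f hf
  have hsym : ∀ y z : H, (inner ℂ (s y) z : ℂ) = inner ℂ y (s z) :=
    (isSelfAdjoint_iff_isSymmetric.mp (IsSelfAdjoint.of_nonneg hsnn))
  have hfx : f x = s (s x) := by rw [← hss]; rfl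
  have h2 : (inner ℂ (f x) x : ℂ) = inner ℂ (s x) (s x) := by
    rw [hfx, hsym (s x) x]
  have h3 : ‖s x‖ ^ 2 ≤ 0 := by
    have := h
    rw [h2] at this
    rw [inner_self_eq_norm_sq] at this; exact this
  have h4 : s x = 0 := by
    have : ‖s x‖ = 0 := by nlinarith [norm_nonneg (s x)]
    simpa using this
  rw [hfx, h4, map_zero]

lemma exists_sqrt_unit {A : H →L[ℂ] H} (hA : 0 ≤ A) (hU : IsUnit A) :
    ∃ s t : H →L[ℂ] H, 0 ≤ s ∧ star s = s ∧ star t = t ∧ s * s = A ∧ s * t = 1 ∧ t * s = 1 := by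
  set s := CFC.sqrt A with hsdef
  have hsnn : 0 ≤ s := CFC.sqrt_nonneg A
  have hstar : star s = s := (IsSelfAdjoint.of_nonneg hsnn).star_eq
  have hss : s * s = A := CFC.sqrt_mul_sqrt_self A hA
  obtain ⟨u, hu⟩ := hU
  have hcomm : Commute s A := by rw [← hss]; exact (Commute.refl s).mul_right (Commute.refl s)
  have hcommu : Commute s (↑u⁻¹ : H →L[ℂ] H) := by
    have : Commute s (↑u : H →L[ℂ] H) := hu ▸ hcomm
    exact this.units_inv_right
  set t := s * ↑u⁻¹ with htdef
  have hst : s * t = 1 := by rw [htdef, ← mul_assoc, hss, ← hu]; exact u.mul_inv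
  have hts : t * s = 1 := by rw [htdef, mul_assoc, ← hcommu.eq, ← mul_assoc, hss, ← hu]; exact u.mul_inv
  have hstart : star t = t := by
    have h1 : star t * (s * t) = star t := by rw [hst, mul_one]
    have h2 : star t * s = 1 := by
      rw [← hstar, ← star_mul, hst, star_one]
    calc star t = star t * (s * t) := h1.symm
      _ = (star t * s) * t := by rw [mul_assoc]
      _ = t := by rw [h2, one_mul]
  exact ⟨s, t, hsnn, hstar, hstart, hss, hst, hts⟩

lemma one_le_smul_of_unit {B : H →L[ℂ] H} (hB : 0 ≤ B) (hU : IsUnit B) :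
    ∃ c : ℝ, 0 ≤ c ∧ (1 : H →L[ℂ] H) ≤ c • B := by
  obtain ⟨s, t, hsnn, hstar, hstart, hss, hst, hts⟩ := exists_sqrt_unit hB hU
  have htt : 0 ≤ t * t := by
    have := star_mul_self_nonneg t
    rwa [hstart] at this
  refine ⟨‖t * t‖, norm_nonneg _, ?_⟩
  have h1 : (1 : H →L[ℂ] H) = s * (t * t) * s := by
    have : s * (t * t) * s = (s * t) * (t * s) := by noncomm_ring
    rw [this, hst, hts, one_mul]
  have h2 : t * t ≤ algebraMap ℝ (H →L[ℂ] H) ‖t * t‖ :=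
    IsSelfAdjoint.le_algebraMap_norm_self (IsSelfAdjoint.of_nonneg htt)
  have h3 : s * (t * t) * s ≤ s * algebraMap ℝ (H →L[ℂ] H) ‖t * t‖ * s := by
    have := star_left_conjugate_le_conjugate h2 s
    rwa [hstar] at this
  have h4 : s * algebraMap ℝ (H →L[ℂ] H) ‖t * t‖ * s = ‖t * t‖ • B := by
    rw [Algebra.algebraMap_eq_smul_one, mul_smul_comm, mul_one, smul_mul_assoc, hss]
  rw [h1]
  rw [h4] at h3
  exact h3

lemma absCont_of_unit {A B : H →L[ℂ] H} (hA : A.IsPositive) (hB : B.IsPositive)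
    (hU : IsUnit B) : AbsCont A B := by
  have hA0 : 0 ≤ A := (nonneg_iff_isPositive A).mpr hA
  obtain ⟨c, hc, hcB⟩ := one_le_smul_of_unit ((nonneg_iff_isPositive B).mpr hB) hU
  refine ⟨fun _ => A, fun _ => hA, fun m n _ => ?_, fun n => ?_, fun x => tendsto_const_nhds⟩
  · rw [loewner_iff_le]
  · refine ⟨‖A‖ * c, by positivity, ?_⟩
    rw [loewner_iff_le]
    calc A ≤ algebraMap ℝ (H →L[ℂ] H) ‖A‖ :=
          IsSelfAdjoint.le_algebraMap_norm_self (IsSelfAdjoint.of_nonneg hA0)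
      _ = ‖A‖ • (1 : H →L[ℂ] H) := Algebra.algebraMap_eq_smul_one _
      _ ≤ ‖A‖ • (c • B) := by
          rw [← sub_nonneg, ← smul_sub]
          exact smul_nn (norm_nonneg A) (by rwa [sub_nonneg])
      _ = (‖A‖ * c) • B := by rw [smul_smul]

lemma inj_of_absCont {A B : H →L[ℂ] H} (hU : IsUnit A) (h : AbsCont A B) :
    ∀ x : H, B x = 0 → x = 0 := by
  obtain ⟨f, hpos, hmono, hbd, htend⟩ := h
  intro x hBx
  have hfx : ∀ n, f n x = 0 := by
    intro n
    obtain ⟨c, hc, hle⟩ := hbd n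
    have hle' : (c • B - f n).IsPositive := hle
    have h1 : 0 ≤ RCLike.re (inner ℂ ((c • B - f n) x) x : ℂ) := (RCLike.nonneg_iff.mp (hle'.inner_nonneg_left x)).1
    have h2 : (c • B - f n) x = -(f n x) := by
      simp [ContinuousLinearMap.sub_apply, ContinuousLinearMap.smul_apply, hBx]
    rw [h2] at h1
    refine apply_eq_zero_of_re_inner_le ((nonneg_iff_isPositive _).mpr (hpos n)) x ?_
    simpa [inner_neg_left] using h1
  have hAx : A x = 0 := by
    have h0 : Tendsto (fun n => f n x) atTop (𝓝 (0 : H)) := by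
      simpa [hfx] using tendsto_const_nhds (α := H) (f := atTop (α := ℕ)) (a := (0:H))
    exact tendsto_nhds_unique (htend x) h0
  obtain ⟨u, hu⟩ := hU
  have h1 : (↑u⁻¹ * ↑u : H →L[ℂ] H) x = x := by rw [u.inv_mul]; rfl
  rw [ContinuousLinearMap.mul_apply, hu, hAx, map_zero] at h1
  exact h1.symm

lemma tendsto_cfc_approx {T : H →L[ℂ] H} (hT : 0 ≤ T) (hinj : ∀ x : H, T x = 0 → x = 0) :
    ∃ g : ℕ → H →L[ℂ] H, (∀ n, 0 ≤ g n) ∧ (∀ m n : ℕ, m ≤ n → g m ≤ g n) ∧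
      (∀ n : ℕ, g n ≤ (n : ℝ) • T) ∧ (∀ x : H, Tendsto (fun n => g n x) atTop (𝓝 x)) := by
  have hspec : ∀ x ∈ spectrum ℝ T, (0:ℝ) ≤ x := fun x hx => spectrum_nonneg_of_nonneg hT hx
  -- the functions
  set h : ℕ → ℝ → ℝ := fun n x => (1 + n * x)⁻¹ with hdef
  have hpos : ∀ (n : ℕ) (x : ℝ), x ∈ spectrum ℝ T → (0:ℝ) < 1 + n * x := by
    intro n x hx
    have := hspec x hx
    positivity
  have hconth : ∀ n : ℕ, ContinuousOn (h n) (spectrum ℝ T) := by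
    intro n
    exact ContinuousOn.inv₀ (by fun_prop) (fun x hx => (hpos n x hx).ne')
  have hcontg : ∀ n : ℕ, ContinuousOn (fun x => 1 - h n x) (spectrum ℝ T) := fun n =>
    continuousOn_const.sub (hconth n)
  set g : ℕ → H →L[ℂ] H := fun n => cfc (fun x : ℝ => 1 - h n x) T with gdef
  set R : ℕ → H →L[ℂ] H := fun n => cfc (h n) T with Rdef
  have hgR : ∀ n, g n = 1 - R n := by
    intro n
    rw [gdef, Rdef]
    calc cfc (fun x : ℝ => 1 - h n x) T
        = cfc (fun _ : ℝ => (1:ℝ)) T - cfc (h n) T := by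
          rw [← cfc_sub (fun _ : ℝ => (1:ℝ)) (h n) T continuousOn_const (hconth n)]
      _ = 1 - cfc (h n) T := by rw [cfc_const_one ℝ T]
  have hinvle : ∀ (n : ℕ) (x : ℝ), x ∈ spectrum ℝ T → h n x ≤ 1 := by
    intro n x hx
    have h1 : (0:ℝ) < 1 + n * x := hpos n x hx
    rw [hdef]
    simp only
    rw [inv_eq_one_div]
    calc 1 / (1 + n * x) ≤ 1 / 1 := one_div_le_one_div_of_le one_pos (by
      have := hspec x hx; nlinarith)
      _ = 1 := by norm_num
  have hinvnn : ∀ (n : ℕ) (x : ℝ), x ∈ spectrum ℝ T → 0 ≤ h n x := by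
    intro n x hx
    exact inv_nonneg.mpr (hpos n x hx).le
  have hg_nonneg : ∀ n, 0 ≤ g n := by
    intro n
    exact cfc_nonneg (fun x hx => by have := hinvle n x hx; linarith)
  have hg_mono : ∀ m n : ℕ, m ≤ n → g m ≤ g n := by
    intro m n hmn
    refine cfc_mono (fun x hx => ?_) (hcontg m) (hcontg n)
    have hx0 := hspec x hx
    have h1 : (0:ℝ) < 1 + m * x := hpos m x hx
    have key : h n x ≤ h m x := by
      rw [hdef]; simp only
      rw [inv_eq_one_div, inv_eq_one_div]
      refine one_div_le_one_div_of_le h1 ?_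
      have : (m:ℝ) ≤ n := Nat.cast_le.mpr hmn
      nlinarith
    linarith
  have hg_le : ∀ n : ℕ, g n ≤ (n : ℝ) • T := by
    intro n
    have h2 : cfc (fun x : ℝ => (n:ℝ) * x) T = (n:ℝ) • T :=
      cfc_const_mul_id (n:ℝ) T (IsSelfAdjoint.of_nonneg hT)
    rw [← h2]
    refine cfc_mono (fun x hx => ?_) (hcontg n) (by fun_prop)
    have hx0 := hspec x hx
    have h1 : (0:ℝ) < 1 + n * x := hpos n x hx
    have key : 1 - h n x = (n * x) / (1 + n * x) := by
      rw [hdef]; field_simp; ring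
    rw [key]
    exact div_le_self (by positivity) (by nlinarith)
  refine ⟨g, hg_nonneg, hg_mono, hg_le, ?_⟩
  -- norm bounds
  have hRnorm : ∀ n : ℕ, ‖R n‖ ≤ 1 := by
    intro n
    refine norm_cfc_le zero_le_one (fun x hx => ?_)
    rw [Real.norm_eq_abs, abs_of_nonneg (hinvnn n x hx)]
    exact hinvle n x hx
  have hRT : ∀ n : ℕ, 1 ≤ n → ‖R n * T‖ ≤ (n:ℝ)⁻¹ := by
    intro n hn
    have hn0 : (0:ℝ) < n := by exact_mod_cast hn
    have h1 : R n * T = cfc (fun x : ℝ => h n x * x) T := by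
      rw [Rdef]
      simp only
      rw [cfc_mul (h n) (fun x => x) T (hconth n) (by fun_prop), cfc_id' ℝ T]
    rw [h1]
    refine norm_cfc_le (by positivity) (fun x hx => ?_)
    have hx0 := hspec x hx
    have h2 : (0:ℝ) < 1 + n * x := hpos n x hx
    have h3 : h n x * x = x / (1 + n * x) := by
      rw [hdef]; simp only; rw [inv_mul_eq_div]
    rw [Real.norm_eq_abs, h3, abs_of_nonneg (by positivity)]
    rw [inv_eq_one_div, div_le_div_iff₀ h2 hn0]
    nlinarith
  -- density of range T
  have hdense : (LinearMap.range (T : H →ₗ[ℂ] H) : Submodule ℂ H).topologicalClosure = ⊤ := by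
    rw [Submodule.topologicalClosure_eq_top_iff, Submodule.eq_bot_iff]
    intro x hx
    have hmem : T x ∈ (LinearMap.range (T : H →ₗ[ℂ] H) : Submodule ℂ H) := LinearMap.mem_range_self _ x
    have hTx : (inner ℂ (T x) x : ℂ) = 0 := hx (T x) hmem
    exact hinj x (apply_eq_zero_of_re_inner_le hT x (by rw [hTx]; simp))
  intro x
  rw [Metric.tendsto_atTop]
  intro ε hε
  have hxcl : x ∈ closure ((LinearMap.range (T : H →ₗ[ℂ] H) : Submodule ℂ H) : Set H) := by
    have h1 : x ∈ (LinearMap.range (T : H →ₗ[ℂ] H) : Submodule ℂ H).topologicalClosure := by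
      rw [hdense]; trivial
    exact h1
  obtain ⟨b, hbK, hbd⟩ := Metric.mem_closure_iff.mp hxcl (ε/2) (by positivity)
  obtain ⟨y, hy⟩ := hbK
  have htd : Tendsto (fun n : ℕ => (n:ℝ)⁻¹ * ‖y‖) atTop (𝓝 0) := by
    simpa using tendsto_inv_atTop_nhds_zero_nat.mul_const ‖y‖
  obtain ⟨N, hN⟩ := eventually_atTop.mp ((htd.eventually (gt_mem_nhds (half_pos hε))).and
    (eventually_ge_atTop 1))
  refine ⟨N, fun n hn => ?_⟩
  obtain ⟨hn1, hn2⟩ := hN n hn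
  have hg : g n x - x = -(R n x) := by
    calc g n x - x = (1 - R n) x - x := by rw [hgR n]
      _ = -(R n x) := by
          simp [ContinuousLinearMap.sub_apply, ContinuousLinearMap.one_apply]
  rw [dist_eq_norm, hg, norm_neg]
  have hsplit : R n x = R n (x - b) + (R n * T) y := by
    rw [ContinuousLinearMap.mul_apply, (by exact hy : T y = b), ← map_add, sub_add_cancel]
  calc ‖R n x‖ ≤ ‖R n (x - b)‖ + ‖(R n * T) y‖ := by rw [hsplit]; exact norm_add_le _ _
    _ ≤ ‖R n‖ * ‖x - b‖ + ‖R n * T‖ * ‖y‖ :=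
        add_le_add (le_opNorm _ _) (le_opNorm _ _)
    _ < ε := by
        have e1 : ‖R n‖ * ‖x - b‖ ≤ 1 * ‖x - b‖ :=
          mul_le_mul_of_nonneg_right (hRnorm n) (norm_nonneg _)
        have e2 : ‖x - b‖ < ε/2 := by rw [← dist_eq_norm]; exact hbd
        have e3 : ‖R n * T‖ * ‖y‖ ≤ (n:ℝ)⁻¹ * ‖y‖ :=
          mul_le_mul_of_nonneg_right (hRT n hn2) (norm_nonneg _)
        linarith

lemma absCont_of_inj {A B : H →L[ℂ] H} (hA : A.IsPositive) (hUA : IsUnit A)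
    (hB : B.IsPositive) (hinj : ∀ x : H, B x = 0 → x = 0) : AbsCont A B := by
  have hA0 : 0 ≤ A := (nonneg_iff_isPositive A).mpr hA
  have hB0 : 0 ≤ B := (nonneg_iff_isPositive B).mpr hB
  obtain ⟨s, t, hsnn, hstar, hstart, hss, hst, hts⟩ := exists_sqrt_unit hA0 hUA
  have htinj : ∀ z : H, t z = 0 → z = 0 := by
    intro z hz
    have h1 : (s * t) z = z := by rw [hst]; rfl
    rw [ContinuousLinearMap.mul_apply, hz, map_zero] at h1
    exact h1.symm
  set B' := t * B * t with hB'def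
  have hB'0 : 0 ≤ B' := by
    have := star_left_conjugate_nonneg hB0 t
    rwa [hstart] at this
  have hB'inj : ∀ x : H, B' x = 0 → x = 0 := by
    intro x hx
    have h1 : t (B (t x)) = 0 := by
      simpa [hB'def, ContinuousLinearMap.mul_apply] using hx
    exact htinj x (hinj _ (htinj _ h1))
  obtain ⟨g, hg0, hgm, hgle, hgt⟩ := tendsto_cfc_approx hB'0 hB'inj
  refine ⟨fun n => s * g n * s, fun n => ?_, fun m n hmn => ?_, fun n => ?_, fun x => ?_⟩
  · refine (nonneg_iff_isPositive _).mp ?_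
    have := star_left_conjugate_nonneg (hg0 n) s
    rwa [hstar] at this
  · rw [loewner_iff_le]
    have := star_left_conjugate_le_conjugate (hgm m n hmn) s
    rwa [hstar] at this
  · refine ⟨(n : ℝ), Nat.cast_nonneg n, ?_⟩
    rw [loewner_iff_le]
    have h1 := star_left_conjugate_le_conjugate (hgle n) s
    rw [hstar] at h1
    have h2 : s * ((n:ℝ) • B') * s = (n:ℝ) • B := by
      rw [mul_smul_comm, smul_mul_assoc]
      congr 1
      have h3 : s * (t * B * t) * s = (s * t) * B * (t * s) := by noncomm_ring
      rw [hB'def, h3, hst, hts, one_mul, mul_one]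
    rw [h2] at h1
    exact h1
  · have h1 : Tendsto (fun n => g n (s x)) atTop (𝓝 (s x)) := hgt (s x)
    have h2 := (s.continuous.tendsto (s x)).comp h1
    have h3 : A x = s (s x) := by rw [← hss]; rfl
    simpa [ContinuousLinearMap.mul_apply, h3, Function.comp_def] using h2

/-- A bijection of the positive cone fixing every non-invertible positive
operator and mapping the set of invertible positive operators onto itself preserves
absolute continuity in both directions. -/
theorem stmt19 (φ : (H →L[ℂ] H) → (H →L[ℂ] H))
    (hbij : Set.BijOn φ {A | A.IsPositive} {A | A.IsPositive})
    (hfix : ∀ A : H →L[ℂ] H, A.IsPositive → ¬ IsUnit A → φ A = A)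
    (honto : φ '' {A : H →L[ℂ] H | A.IsPositive ∧ IsUnit A} =
      {A : H →L[ℂ] H | A.IsPositive ∧ IsUnit A}) :
    ∀ A B : H →L[ℂ] H, A.IsPositive → B.IsPositive →
      (AbsCont A B ↔ AbsCont (φ A) (φ B)) := by
  intro A B hA hB
  have hφA : (φ A).IsPositive := hbij.mapsTo hA
  have hφB : (φ B).IsPositive := hbij.mapsTo hB
  by_cases hUB : IsUnit B
  · have hφBU : (φ B).IsPositive ∧ IsUnit (φ B) := by
      have : φ B ∈ {X : H →L[ℂ] H | X.IsPositive ∧ IsUnit X} := by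
        rw [← honto]
        exact Set.mem_image_of_mem φ ⟨hB, hUB⟩
      exact this
    constructor
    · intro _; exact absCont_of_unit hφA hφBU.1 hφBU.2
    · intro _; exact absCont_of_unit hA hB hUB
  · have hfixB : φ B = B := hfix B hB hUB
    by_cases hUA : IsUnit A
    · have hφAU : (φ A).IsPositive ∧ IsUnit (φ A) := by
        have : φ A ∈ {X : H →L[ℂ] H | X.IsPositive ∧ IsUnit X} := by
          rw [← honto]
          exact Set.mem_image_of_mem φ ⟨hA, hUA⟩
        exact this
      rw [hfixB]
      constructor
      · intro h
        exact absCont_of_inj hφAU.1 hφAU.2 hB (inj_of_absCont hUA h)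
      · intro h
        exact absCont_of_inj hA hUA hB (inj_of_absCont hφAU.2 h)
    · rw [hfix A hA hUA, hfixB]
end
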